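/- arXiv:1810.11669 — 3 statements merged into one kernel-verified Lean document; each statement's English description precedes it below -/
import Mathlib

section
/- For 2 ≤ g ≤ n−1 and α ∈ [0,1), let C_{n,g} be the digraph obtained by attaching the directed path v_g v_{g+1} ... v_n v_1 to the directed cycle v_1 v_2 ... v_g v_1 (sharing only vertices v_g and v_1), and let C'_{n,g} = C_{n,g} − {(v_n, v_1)} + {(v_n, v_g)}. Then λ_α(C'_{n,g}) > λ_α(C_{n,g}). -/
open scoped Classical
open Matrix

/-- Spectral radius: largest modulus of (complex) eigenvalues, i.e. roots of the
characteristic polynomial of the complexified matrix. -/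
noncomputable def specRad {m : Type*} [Fintype m] [DecidableEq m] (M : Matrix m m ℝ) : ℝ :=
  sSup {r : ℝ | ∃ μ : ℂ, (M.map Complex.ofReal).charpoly.IsRoot μ ∧ r = ‖μ‖}

/-- Irreducibility of a matrix: the associated digraph is strongly connected. -/
def Irred {n : ℕ} (M : Matrix (Fin n) (Fin n) ℝ) : Prop :=
  ∀ i j : Fin n, Relation.ReflTransGen (fun a b => M a b ≠ 0) i j

/-- Outdegree of a vertex in a digraph on `Fin n`. -/
noncomputable def outdeg {n : ℕ} (G : Fin n → Fin n → Prop) (i : Fin n) : ℕ :=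
  (Finset.univ.filter (fun j => G i j)).card

/-- Indegree of a vertex. -/
noncomputable def indeg {n : ℕ} (G : Fin n → Fin n → Prop) (i : Fin n) : ℕ :=
  (Finset.univ.filter (fun j => G j i)).card

/-- The matrix `A_α(G) = α D(G) + (1-α) A(G)`. -/
noncomputable def Aalpha {n : ℕ} (α : ℝ) (G : Fin n → Fin n → Prop) :
    Matrix (Fin n) (Fin n) ℝ :=
  α • Matrix.diagonal (fun i => (outdeg G i : ℝ)) +
    (1 - α) • (Matrix.of fun i j => if G i j then (1 : ℝ) else 0)

/-- The `A_α` spectral radius of a digraph. -/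
noncomputable def lamAlpha {n : ℕ} (α : ℝ) (G : Fin n → Fin n → Prop) : ℝ :=
  specRad (Aalpha α G)

/-- Strong connectivity of a digraph. -/
def SConn {n : ℕ} (G : Fin n → Fin n → Prop) : Prop :=
  ∀ u v : Fin n, Relation.ReflTransGen G u v

/-- Isomorphism of digraphs on `Fin n`. -/
def DIso {n : ℕ} (G H : Fin n → Fin n → Prop) : Prop :=
  ∃ e : Equiv.Perm (Fin n), ∀ u v, G u v ↔ H (e u) (e v)

/-- The directed cycle on `Fin n`. -/
def dirCycle (n : ℕ) : Fin n → Fin n → Prop :=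
  fun i j => j.val = (i.val + 1) % n


/-- Deleting a set of vertices from a digraph. -/
def delVerts {n : ℕ} (G : Fin n → Fin n → Prop) (S : Finset (Fin n)) :
    Fin n → Fin n → Prop :=
  fun a b => G a b ∧ a ∉ S ∧ b ∉ S

/-- The digraph obtained by deleting the vertices of `S` is strongly connected. -/
def SConnAvoid {n : ℕ} (G : Fin n → Fin n → Prop) (S : Finset (Fin n)) : Prop :=
  ∀ u v : Fin n, u ∉ S → v ∉ S → Relation.ReflTransGen (delVerts G S) u v

/-- The vertex connectivity of `G` equals `k`. -/
def vertexConnIs {n : ℕ} (G : Fin n → Fin n → Prop) (k : ℕ) : Prop :=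
  (∃ S : Finset (Fin n), S.card = k ∧ ¬ SConnAvoid G S) ∧
    ∀ S : Finset (Fin n), ¬ SConnAvoid G S → k ≤ S.card

/-- Deleting a set of arcs from a digraph. -/
def delArcs {n : ℕ} (G : Fin n → Fin n → Prop) (S : Finset (Fin n × Fin n)) :
    Fin n → Fin n → Prop :=
  fun a b => G a b ∧ (a, b) ∉ S

/-- The arc connectivity of `G` equals `k`. -/
def arcConnIs {n : ℕ} (G : Fin n → Fin n → Prop) (k : ℕ) : Prop :=
  (∃ S : Finset (Fin n × Fin n), S.card = k ∧ ¬ SConn (delArcs G S)) ∧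
    ∀ S : Finset (Fin n × Fin n), ¬ SConn (delArcs G S) → k ≤ S.card

/-- `G` contains a directed cycle of length `g`. -/
def hasCycleLen {n : ℕ} (G : Fin n → Fin n → Prop) (g : ℕ) : Prop :=
  ∃ c : Fin g → Fin n, Function.Injective c ∧
    ∀ i : Fin g, G (c i) (c ⟨(i.val + 1) % g, Nat.mod_lt _ i.pos⟩)

/-- The girth of `G` equals `g`. -/
def girthIs {n : ℕ} (G : Fin n → Fin n → Prop) (g : ℕ) : Prop :=
  hasCycleLen G g ∧ ∀ m, 0 < m → m < g → ¬ hasCycleLen G m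

/-- The clique number of `G` equals `d`. -/
def cliqueNumIs {n : ℕ} (G : Fin n → Fin n → Prop) (d : ℕ) : Prop :=
  (∃ S : Finset (Fin n), S.card = d ∧ ∀ u ∈ S, ∀ v ∈ S, u ≠ v → G u v ∧ G v u) ∧
    ∀ S : Finset (Fin n), (∀ u ∈ S, ∀ v ∈ S, u ≠ v → G u v ∧ G v u) → S.card ≤ d

/-- The digraph `C_{n,g}`: the directed cycle `v_1 … v_g v_1` (indices `0,…,g-1`)
together with the directed path `v_g v_{g+1} … v_n v_1`. -/
def Cng (n g : ℕ) : Fin n → Fin n → Prop := fun i j =>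
  j.val = i.val + 1 ∨ (i.val = g - 1 ∧ j.val = 0) ∨ (i.val = n - 1 ∧ j.val = 0)

/-- `C'_{n,g} = C_{n,g} - {(v_n, v_1)} + {(v_n, v_g)}`. -/
def Cng' (n g : ℕ) : Fin n → Fin n → Prop := fun i j =>
  j.val = i.val + 1 ∨ (i.val = g - 1 ∧ j.val = 0) ∨ (i.val = n - 1 ∧ j.val = g - 1)

/-- The digraph `B_{n,d}`: a complete digraph on the `d` vertices
`{0} ∪ {n-d+1, …, n-1}` together with the directed path `v_1 v_2 … v_{n-d+2}`
(indices `0, 1, …, n-d+1`). -/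
def Bnd (n d : ℕ) : Fin n → Fin n → Prop := fun i j =>
  (j.val = i.val + 1 ∧ j.val ≤ n - d + 1) ∨
    (i ≠ j ∧ (i.val = 0 ∨ n - d + 1 ≤ i.val) ∧ (j.val = 0 ∨ n - d + 1 ≤ j.val))

/-- `B'_{n,d} = B_{n,d} - {(v_{n-d+1}, v_{n-d+2})} + {(v_{n-d+1}, v_1)}`. -/
def Bnd' (n d : ℕ) : Fin n → Fin n → Prop := fun i j =>
  (j.val = i.val + 1 ∧ j.val ≤ n - d) ∨ (i.val = n - d ∧ j.val = 0) ∨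
    (i ≠ j ∧ (i.val = 0 ∨ n - d + 1 ≤ i.val) ∧ (j.val = 0 ∨ n - d + 1 ≤ j.val))

/-- The digraph `K(n,k,m)`: parts `K_m` (indices `< m`), `K_k` (indices in `[m, m+k)`),
`K_{n-k-m}` (indices `≥ m+k`); all parts complete, `K_k` joined both ways to the others,
and all one-way arcs from `K_m` to `K_{n-k-m}`. -/
def Knkm (n k m : ℕ) : Fin n → Fin n → Prop := fun i j =>
  i ≠ j ∧ ¬(m + k ≤ i.val ∧ j.val < m)

-- eval of charpoly
lemma my_eval_charpoly {m : Type*} [Fintype m] [DecidableEq m] {R : Type*} [CommRing R]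
    (M : Matrix m m R) (x : R) :
    M.charpoly.eval x = (x • (1 : Matrix m m R) - M).det := by
  rw [Matrix.charpoly, ← Polynomial.coe_evalRingHom, RingHom.map_det]
  congr 1
  ext i j
  by_cases h : i = j <;>
    simp [Matrix.charmatrix_apply, Matrix.one_apply, h, Matrix.diagonal_apply]

-- real eigenvalue gives root of complexified charpoly
lemma isRoot_of_eig {n : ℕ} (M : Matrix (Fin n) (Fin n) ℝ) (x : ℝ)
    (v : Fin n → ℝ) (hv : v ≠ 0) (hev : M.mulVec v = x • v) :
    ((M.map Complex.ofReal).charpoly).IsRoot (x : ℂ) := by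
  have hdet : (x • (1 : Matrix (Fin n) (Fin n) ℝ) - M).det = 0 := by
    rw [← Matrix.exists_mulVec_eq_zero_iff]
    exact ⟨v, hv, by simp [Matrix.sub_mulVec, hev, Matrix.smul_mulVec]⟩
  have h1 : M.charpoly.eval x = 0 := by rw [my_eval_charpoly]; exact hdet
  have h2 : (M.map Complex.ofReal).charpoly = M.charpoly.map (Complex.ofRealHom) := by
    rw [← Matrix.charpoly_map]; rfl
  rw [Polynomial.IsRoot, h2]
  have : ((x : ℝ) : ℂ) = Complex.ofRealHom x := rfl
  rw [this, Polynomial.eval_map, Polynomial.eval₂_at_apply, h1, map_zero]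

lemma specRad_bddAbove {n : ℕ} (M : Matrix (Fin n) (Fin n) ℝ) :
    BddAbove {r : ℝ | ∃ μ : ℂ, (M.map Complex.ofReal).charpoly.IsRoot μ ∧ r = ‖μ‖} := by
  have hfin : Set.Finite {μ : ℂ | (M.map Complex.ofReal).charpoly.IsRoot μ} :=
    Polynomial.finite_setOf_isRoot ((M.map Complex.ofReal).charpoly_monic.ne_zero)
  have : {r : ℝ | ∃ μ : ℂ, (M.map Complex.ofReal).charpoly.IsRoot μ ∧ r = ‖μ‖}
      = (fun μ : ℂ => ‖μ‖) '' {μ : ℂ | (M.map Complex.ofReal).charpoly.IsRoot μ} := by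
    ext r; simp [eq_comm, and_comm]
  rw [this]
  exact (hfin.image _).bddAbove

lemma le_specRad_of_eig {n : ℕ} (M : Matrix (Fin n) (Fin n) ℝ) (x : ℝ) (hx : 0 ≤ x)
    (v : Fin n → ℝ) (hv : v ≠ 0) (hev : M.mulVec v = x • v) : x ≤ specRad M := by
  apply le_csSup (specRad_bddAbove M)
  exact ⟨(x : ℂ), isRoot_of_eig M x v hv hev, by rw [Complex.norm_real, Real.norm_of_nonneg hx]⟩


lemma isRoot_of_det {n : ℕ} (M : Matrix (Fin n) (Fin n) ℝ) (x : ℝ)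
    (hdet : (x • (1 : Matrix (Fin n) (Fin n) ℝ) - M).det = 0) :
    ((M.map Complex.ofReal).charpoly).IsRoot (x : ℂ) := by
  have h1 : M.charpoly.eval x = 0 := by rw [my_eval_charpoly]; exact hdet
  have h2 : (M.map Complex.ofReal).charpoly = M.charpoly.map (Complex.ofRealHom) := by
    rw [← Matrix.charpoly_map]; rfl
  rw [Polynomial.IsRoot, h2]
  have h3 : ((x : ℝ) : ℂ) = Complex.ofRealHom x := rfl
  rw [h3, Polynomial.eval_map, Polynomial.eval₂_at_apply, h1, map_zero]

lemma specRad_le_of_posLeftEig {n : ℕ} (hn : 0 < n) (M : Matrix (Fin n) (Fin n) ℝ)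
    (hM : ∀ i j, 0 ≤ M i j) (x : ℝ) (hx : 0 ≤ x)
    (w : Fin n → ℝ) (hw : ∀ i, 0 < w i) (hev : M.transpose.mulVec w = x • w) :
    specRad M ≤ x := by
  have i0 : Fin n := ⟨0, hn⟩
  have hwne : w ≠ 0 := fun h0 => absurd (congrFun h0 i0) (by simpa using (hw i0).ne')
  apply csSup_le
  · -- nonempty : x itself is in the set
    have hdet : (x • (1 : Matrix (Fin n) (Fin n) ℝ) - M).det = 0 := by
      rw [← Matrix.det_transpose, ← Matrix.exists_mulVec_eq_zero_iff]
      refine ⟨w, hwne, ?_⟩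
      simp [Matrix.transpose_sub, Matrix.transpose_smul, Matrix.transpose_one,
        Matrix.sub_mulVec, hev, Matrix.smul_mulVec]
    exact ⟨x, ⟨(x : ℂ), isRoot_of_det M x hdet,
      by rw [Complex.norm_real, Real.norm_of_nonneg hx]⟩⟩
  · rintro r ⟨μ, hμ, rfl⟩
    -- get a complex eigenvector
    have hdetC : (μ • (1 : Matrix (Fin n) (Fin n) ℂ) - M.map Complex.ofReal).det = 0 := by
      have := hμ
      rwa [Polynomial.IsRoot, my_eval_charpoly] at this
    obtain ⟨u, hu, huv⟩ := (Matrix.exists_mulVec_eq_zero_iff).mpr hdetC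
    have heig : (M.map Complex.ofReal).mulVec u = μ • u := by
      have := huv
      rw [Matrix.sub_mulVec, Matrix.smul_mulVec, sub_eq_zero] at this
      simp only [Matrix.one_mulVec] at this
      exact this.symm
    -- weighted sum argument
    set S : ℝ := ∑ i, w i * ‖u i‖ with hS
    have hSpos : 0 < S := by
      obtain ⟨i, hi⟩ : ∃ i, u i ≠ 0 := by
        by_contra h; push_neg at h; exact hu (funext fun i => h i)
      refine Finset.sum_pos' (fun i _ => mul_nonneg (hw i).le (norm_nonneg _)) ⟨i, Finset.mem_univ i, ?_⟩
      have : 0 < ‖u i‖ := by simpa using hi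
      exact mul_pos (hw i) this
    have key : ‖μ‖ * S ≤ x * S := by
      have h1 : ∀ i, ‖μ‖ * ‖u i‖ ≤ ∑ j, M i j * ‖u j‖ := by
        intro i
        rw [← norm_mul]
        have : μ * u i = ∑ j, (M i j : ℂ) * u j := by
          have h5 := congrFun heig i
          simp only [Matrix.mulVec, dotProduct, Pi.smul_apply, smul_eq_mul,
            Matrix.map_apply] at h5
          rw [← h5]
        rw [this]
        refine le_trans (norm_sum_le _ _) ?_
        refine Finset.sum_le_sum fun j _ => ?_
        rw [norm_mul, Complex.norm_real, Real.norm_of_nonneg (hM i j)]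
      calc ‖μ‖ * S = ∑ i, w i * (‖μ‖ * ‖u i‖) := by
            rw [Finset.mul_sum]; exact Finset.sum_congr rfl fun i _ => by ring
        _ ≤ ∑ i, w i * ∑ j, M i j * ‖u j‖ := by
            refine Finset.sum_le_sum fun i _ => ?_
            exact mul_le_mul_of_nonneg_left (h1 i) (hw i).le
        _ = ∑ j, (∑ i, M.transpose j i * w i) * ‖u j‖ := by
            simp_rw [Finset.mul_sum, Finset.sum_mul]
            rw [Finset.sum_comm]
            refine Finset.sum_congr rfl fun j _ => Finset.sum_congr rfl fun i _ => ?_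
            simp [Matrix.transpose_apply]; ring
        _ = ∑ j, x * w j * ‖u j‖ := by
            refine Finset.sum_congr rfl fun j _ => ?_
            have := congrFun hev j
            simp only [Matrix.mulVec, dotProduct] at this
            rw [this]; simp
        _ = x * S := by rw [Finset.mul_sum]; exact Finset.sum_congr rfl fun i _ => by ring
    exact le_of_mul_le_mul_right key hSpos

lemma aalpha_mulVec {n : ℕ} (α : ℝ) (G : Fin n → Fin n → Prop) (v : Fin n → ℝ) (i : Fin n) :
    (Aalpha α G).mulVec v i
      = α * (outdeg G i : ℝ) * v i
        + (1 - α) * ∑ j ∈ Finset.univ.filter (fun j => G i j), v j := by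
  unfold Aalpha
  rw [Matrix.add_mulVec]
  simp only [Pi.add_apply, Matrix.smul_mulVec, Pi.smul_apply, smul_eq_mul]
  congr 1
  · rw [Matrix.mulVec_diagonal]; ring
  · congr 1
    simp only [Matrix.mulVec, dotProduct, Matrix.of_apply]
    rw [Finset.sum_filter]
    exact Finset.sum_congr rfl fun j _ => by by_cases h : G i j <;> simp [h]

lemma aalpha_transpose_mulVec {n : ℕ} (α : ℝ) (G : Fin n → Fin n → Prop) (w : Fin n → ℝ)
    (j : Fin n) :
    (Aalpha α G).transpose.mulVec w j
      = α * (outdeg G j : ℝ) * w j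
        + (1 - α) * ∑ i ∈ Finset.univ.filter (fun i => G i j), w i := by
  unfold Aalpha
  simp only [Matrix.transpose_add, Matrix.transpose_smul, Matrix.add_mulVec, Pi.add_apply,
    Matrix.smul_mulVec, Pi.smul_apply, smul_eq_mul, Matrix.diagonal_transpose]
  congr 1
  · rw [Matrix.mulVec_diagonal]; ring
  · congr 1
    simp only [Matrix.mulVec, dotProduct, Matrix.transpose_apply, Matrix.of_apply]
    rw [Finset.sum_filter]
    exact Finset.sum_congr rfl fun i _ => by by_cases h : G i j <;> simp [h]

lemma aalpha_nonneg {n : ℕ} {α : ℝ} (h0 : 0 ≤ α) (h1 : α ≤ 1) (G : Fin n → Fin n → Prop)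
    (i j : Fin n) : 0 ≤ Aalpha α G i j := by
  unfold Aalpha
  simp only [Matrix.add_apply, Pi.smul_apply, Matrix.smul_apply, smul_eq_mul, Matrix.of_apply]
  have : (0:ℝ) ≤ Matrix.diagonal (fun i => ((outdeg G i : ℕ) : ℝ)) i j := by
    by_cases h : i = j <;> simp [Matrix.diagonal_apply, h]
  have h2 : (0:ℝ) ≤ (if G i j then (1:ℝ) else 0) := by positivity
  nlinarith

lemma filter_eq_singleton {n : ℕ} (p : Fin n → Prop) (a : Fin n)
    (h : ∀ j, p j ↔ j = a) : Finset.univ.filter p = {a} := by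
  ext j; simp [h]

lemma filter_eq_pair {n : ℕ} (p : Fin n → Prop) (a b : Fin n) (hab : a ≠ b)
    (h : ∀ j, p j ↔ j = a ∨ j = b) : Finset.univ.filter p = {a, b} := by
  ext j; simp [h]


/-- `λ_α(C'_{n,g}) > λ_α(C_{n,g})`. -/
theorem stmt10 {n g : ℕ} (hg : 2 ≤ g) (hgn : g ≤ n - 1) (hn : 3 ≤ n)
    (α : ℝ) (hα0 : 0 ≤ α) (hα1 : α < 1) :
    lamAlpha α (Cng n g) < lamAlpha α (Cng' n g) := by
  have hgn' : g + 1 ≤ n := by omega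
  set β : ℝ := 1 - α with hβdef
  have hβ : 0 < β := by rw [hβdef]; linarith
  -- first root
  have hEx : ∃ x : ℝ, 1 < x ∧ x ≤ 2 ∧
      (x - 2*α)*((x-α)/β)^(n-1) - β*((x-α)/β)^(n-g) - β = 0 := by
    set f : ℝ → ℝ := fun z => (z - 2*α)*((z-α)/β)^(n-1) - β*((z-α)/β)^(n-g) - β with hfdef
    have hfc : Continuous f := by rw [hfdef]; fun_prop
    have hf1 : f 1 = -1 := by
      simp only [hfdef]
      rw [← hβdef, div_self hβ.ne']
      simp only [one_pow]
      rw [hβdef]; ring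
    have hf2 : 0 ≤ f 2 := by
      simp only [hfdef]
      have hu1 : (1:ℝ) ≤ (2 - α)/β := by
        rw [le_div_iff₀ hβ, hβdef]; linarith
      have p1 : ((2 - α)/β)^(n-g) ≤ ((2-α)/β)^(n-1) := pow_le_pow_right₀ hu1 (by omega)
      have p2 : (1:ℝ) ≤ ((2-α)/β)^(n-1) := by
        simpa using pow_le_pow_right₀ hu1 (Nat.zero_le (n-1))
      have h2 : (2:ℝ) - 2*α = 2*β := by rw [hβdef]; ring
      rw [h2]
      nlinarith
    have h0m : (0:ℝ) ∈ Set.Icc (f 1) (f 2) := by rw [hf1]; exact ⟨by norm_num, hf2⟩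
    obtain ⟨x, hx, hfx⟩ := intermediate_value_Icc one_le_two hfc.continuousOn h0m
    refine ⟨x, ?_, hx.2, by simpa [hfdef] using hfx⟩
    rcases eq_or_lt_of_le hx.1 with h|h
    · exfalso; rw [← h, hf1] at hfx; norm_num at hfx
    · exact h
  obtain ⟨x, hx1, hx2, hFx⟩ := hEx
  set s : ℝ := (x - α)/β with hsdef
  have hβs : β * s = x - α := by rw [hsdef]; field_simp
  have hs1 : 1 < s := by
    rw [hsdef, lt_div_iff₀ hβ, hβdef]; linarith
  have hs0 : 0 < s := lt_trans one_pos hs1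
  have hx2α : 0 < x - 2*α := by
    have h2 : 0 < s^(n-1) := pow_pos hs0 _
    have h3 : 0 < s^(n-g) := pow_pos hs0 _
    nlinarith
  have hxval : x = α + β*s := by linarith
  -- second root
  have hEy : ∃ y : ℝ, x < y ∧ y ≤ 2 ∧
      (y - 2*α)*((y-α)/β)^(n-1) - β*((y-α)/β)^(n-g) - β*((y-α)/β)^(g-1) = 0 := by
    set f : ℝ → ℝ := fun z =>
      (z - 2*α)*((z-α)/β)^(n-1) - β*((z-α)/β)^(n-g) - β*((z-α)/β)^(g-1) with hfdef
    have hfc : Continuous f := by rw [hfdef]; fun_prop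
    have hfx : f x < 0 := by
      simp only [hfdef]
      rw [← hsdef]
      have hsg : 1 < s^(g-1) := one_lt_pow₀ hs1 (by omega)
      have h4 := mul_lt_mul_of_pos_left hsg hβ
      linarith
    have hf2 : 0 ≤ f 2 := by
      simp only [hfdef]
      have hu1 : (1:ℝ) ≤ (2 - α)/β := by
        rw [le_div_iff₀ hβ, hβdef]; linarith
      have p1 : ((2 - α)/β)^(n-g) ≤ ((2-α)/β)^(n-1) := pow_le_pow_right₀ hu1 (by omega)
      have p3 : ((2 - α)/β)^(g-1) ≤ ((2-α)/β)^(n-1) := pow_le_pow_right₀ hu1 (by omega)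
      have h2 : (2:ℝ) - 2*α = 2*β := by rw [hβdef]; ring
      rw [h2]
      nlinarith
    have h0m : (0:ℝ) ∈ Set.Icc (f x) (f 2) := ⟨hfx.le, hf2⟩
    obtain ⟨y, hy, hfy⟩ := intermediate_value_Icc hx2 hfc.continuousOn h0m
    refine ⟨y, ?_, hy.2, by simpa [hfdef] using hfy⟩
    rcases eq_or_lt_of_le hy.1 with h|h
    · exfalso; rw [← h] at hfy; linarith
    · exact h
  obtain ⟨y, hxy, hy2, hGy⟩ := hEy
  set t : ℝ := (y - α)/β with htdef
  have hβt : β * t = y - α := by rw [htdef]; field_simp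
  have hyval : y = α + β*t := by linarith
  -- outdegrees
  have houtC : ∀ j : Fin n, (outdeg (Cng n g) j : ℝ) = if j.val = g - 1 then 2 else 1 := by
    intro j; have hj := j.isLt
    by_cases h : j.val = g - 1
    · rw [if_pos h]
      have hf : Finset.univ.filter (fun k => Cng n g j k)
          = {(⟨g, by omega⟩ : Fin n), (⟨0, by omega⟩ : Fin n)} := by
        apply filter_eq_pair
        · simp only [ne_eq, Fin.mk.injEq]; omega
        · intro k; have hk := k.isLt
          simp only [Cng, Fin.ext_iff, Fin.val_mk]; omega
      rw [outdeg, hf, Finset.card_pair (by simp only [ne_eq, Fin.mk.injEq]; omega)]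
      norm_num
    · rw [if_neg h]
      by_cases h2 : j.val = n - 1
      · have hf : Finset.univ.filter (fun k => Cng n g j k) = {(⟨0, by omega⟩ : Fin n)} :=
          filter_eq_singleton _ _ (fun k => by
            have hk := k.isLt; simp only [Cng, Fin.ext_iff, Fin.val_mk]; omega)
        rw [outdeg, hf, Finset.card_singleton]; norm_num
      · have hf : Finset.univ.filter (fun k => Cng n g j k)
            = {(⟨j.val + 1, by omega⟩ : Fin n)} :=
          filter_eq_singleton _ _ (fun k => by
            have hk := k.isLt; simp only [Cng, Fin.ext_iff, Fin.val_mk]; omega)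
        rw [outdeg, hf, Finset.card_singleton]; norm_num
  have houtC' : ∀ j : Fin n, (outdeg (Cng' n g) j : ℝ) = if j.val = g - 1 then 2 else 1 := by
    intro j; have hj := j.isLt
    by_cases h : j.val = g - 1
    · rw [if_pos h]
      have hf : Finset.univ.filter (fun k => Cng' n g j k)
          = {(⟨g, by omega⟩ : Fin n), (⟨0, by omega⟩ : Fin n)} := by
        apply filter_eq_pair
        · simp only [ne_eq, Fin.mk.injEq]; omega
        · intro k; have hk := k.isLt
          simp only [Cng', Fin.ext_iff, Fin.val_mk]; omega
      rw [outdeg, hf, Finset.card_pair (by simp only [ne_eq, Fin.mk.injEq]; omega)]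
      norm_num
    · rw [if_neg h]
      by_cases h2 : j.val = n - 1
      · have hf : Finset.univ.filter (fun k => Cng' n g j k) = {(⟨g-1, by omega⟩ : Fin n)} :=
          filter_eq_singleton _ _ (fun k => by
            have hk := k.isLt; simp only [Cng', Fin.ext_iff, Fin.val_mk]; omega)
        rw [outdeg, hf, Finset.card_singleton]; norm_num
      · have hf : Finset.univ.filter (fun k => Cng' n g j k)
            = {(⟨j.val + 1, by omega⟩ : Fin n)} :=
          filter_eq_singleton _ _ (fun k => by
            have hk := k.isLt; simp only [Cng', Fin.ext_iff, Fin.val_mk]; omega)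
        rw [outdeg, hf, Finset.card_singleton]; norm_num
  -- the positive left eigenvector for Cng
  obtain ⟨w, hwval⟩ : ∃ w : Fin n → ℝ, ∀ j : Fin n,
      w j = if j.val + 2 ≤ g then (x - 2*α) * s^(n-2-j.val) else β * s^(n-1-j.val) :=
    ⟨fun j => if j.val + 2 ≤ g then (x - 2*α) * s^(n-2-j.val) else β * s^(n-1-j.val),
      fun j => rfl⟩
  have hwpos : ∀ j, 0 < w j := by
    intro j; rw [hwval]; split_ifs
    · exact mul_pos hx2α (pow_pos hs0 _)
    · exact mul_pos hβ (pow_pos hs0 _)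
  have hwev : (Aalpha α (Cng n g)).transpose.mulVec w = x • w := by
    funext j
    rw [aalpha_transpose_mulVec, Pi.smul_apply, smul_eq_mul, houtC j]
    have hj := j.isLt
    rcases (by omega : j.val = 0 ∨ (1 ≤ j.val ∧ j.val + 2 ≤ g) ∨ j.val = g - 1 ∨ g ≤ j.val)
      with hc | ⟨hc1, hc2⟩ | hc | hc
    · rw [if_neg (by omega)]
      have hf : Finset.univ.filter (fun i => Cng n g i j)
          = {(⟨g-1, by omega⟩ : Fin n), (⟨n-1, by omega⟩ : Fin n)} := by
        apply filter_eq_pair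
        · simp only [ne_eq, Fin.mk.injEq]; omega
        · intro k; have hk := k.isLt
          simp only [Cng, Fin.ext_iff, Fin.val_mk]; omega
      rw [hf, Finset.sum_pair (by simp only [ne_eq, Fin.mk.injEq]; omega)]
      simp only [hwval, Fin.val_mk]
      rw [hc]
      rw [if_pos (by omega), if_neg (by omega), if_neg (by omega)]
      rw [show n - 2 - 0 = n - 2 from by omega, show n-1-(g-1) = n - g from by omega,
        show n-1-(n-1) = 0 from by omega, pow_zero]
      have hFx' := hFx
      have e : s^(n-1) = s^(n-2)*s := by rw [← pow_succ]; congr 1; omega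
      rw [e, hxval] at hFx'
      rw [hxval, ← hβdef]
      linear_combination (-β) * hFx'
    · rw [if_neg (by omega)]
      have hf : Finset.univ.filter (fun i => Cng n g i j)
          = {(⟨j.val - 1, by omega⟩ : Fin n)} :=
        filter_eq_singleton _ _ (fun k => by
          have hk := k.isLt; simp only [Cng, Fin.ext_iff, Fin.val_mk]; omega)
      rw [hf, Finset.sum_singleton]
      simp only [hwval, Fin.val_mk]
      rw [if_pos (by omega), if_pos (by omega)]
      rw [show n - 2 - (j.val - 1) = (n - 2 - j.val) + 1 from by omega, pow_succ]
      rw [hxval, ← hβdef]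
      ring
    · rw [if_pos hc]
      have hf : Finset.univ.filter (fun i => Cng n g i j)
          = {(⟨g - 2, by omega⟩ : Fin n)} :=
        filter_eq_singleton _ _ (fun k => by
          have hk := k.isLt; simp only [Cng, Fin.ext_iff, Fin.val_mk]; omega)
      rw [hf, Finset.sum_singleton]
      simp only [hwval, Fin.val_mk]
      rw [hc]
      rw [if_neg (by omega), if_pos (by omega)]
      rw [show n-1-(g-1) = n - g from by omega, show n-2-(g-2) = n - g from by omega]
      rw [← hβdef]
      ring
    · rw [if_neg (by omega)]
      have hf : Finset.univ.filter (fun i => Cng n g i j)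
          = {(⟨j.val - 1, by omega⟩ : Fin n)} :=
        filter_eq_singleton _ _ (fun k => by
          have hk := k.isLt; simp only [Cng, Fin.ext_iff, Fin.val_mk]; omega)
      rw [hf, Finset.sum_singleton]
      simp only [hwval, Fin.val_mk]
      rw [if_neg (by omega), if_neg (by omega)]
      rw [show n-1-(j.val-1) = (n-1-j.val) + 1 from by omega, pow_succ]
      rw [hxval, ← hβdef]
      ring
  -- the eigenvector for Cng'
  obtain ⟨v, hvval⟩ : ∃ v : Fin n → ℝ, ∀ i : Fin n,
      v i = if i.val + 1 ≤ g then β * t^(i.val)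
            else ((y - 2*α)*t^(g-1) - β) * t^(i.val - g) :=
    ⟨fun i => if i.val + 1 ≤ g then β * t^(i.val)
            else ((y - 2*α)*t^(g-1) - β) * t^(i.val - g), fun i => rfl⟩
  have hvne : v ≠ 0 := by
    intro h0
    have h1 := congrFun h0 ⟨0, by omega⟩
    rw [hvval] at h1
    simp only [Fin.val_mk, Pi.zero_apply] at h1
    rw [if_pos (by omega), pow_zero, mul_one] at h1
    exact hβ.ne' h1
  have hvev : (Aalpha α (Cng' n g)).mulVec v = y • v := by
    funext i
    rw [aalpha_mulVec, Pi.smul_apply, smul_eq_mul, houtC' i]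
    have hi := i.isLt
    rcases (by omega : (i.val + 2 ≤ g) ∨ i.val = g - 1 ∨ (g ≤ i.val ∧ i.val + 2 ≤ n)
        ∨ i.val = n - 1) with hc | hc | ⟨hc1, hc2⟩ | hc
    · rw [if_neg (by omega)]
      have hf : Finset.univ.filter (fun k => Cng' n g i k)
          = {(⟨i.val + 1, by omega⟩ : Fin n)} :=
        filter_eq_singleton _ _ (fun k => by
          have hk := k.isLt; simp only [Cng', Fin.ext_iff, Fin.val_mk]; omega)
      rw [hf, Finset.sum_singleton]
      simp only [hvval, Fin.val_mk]
      rw [if_pos (by omega), if_pos (by omega), pow_succ]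
      rw [hyval, ← hβdef]
      ring
    · rw [if_pos hc]
      have hf : Finset.univ.filter (fun k => Cng' n g i k)
          = {(⟨g, by omega⟩ : Fin n), (⟨0, by omega⟩ : Fin n)} := by
        apply filter_eq_pair
        · simp only [ne_eq, Fin.mk.injEq]; omega
        · intro k; have hk := k.isLt
          simp only [Cng', Fin.ext_iff, Fin.val_mk]; omega
      rw [hf, Finset.sum_pair (by simp only [ne_eq, Fin.mk.injEq]; omega)]
      simp only [hvval, Fin.val_mk]
      rw [hc]
      rw [if_pos (by omega), if_neg (by omega), if_pos (by omega)]
      rw [show g - g = 0 from by omega]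
      simp only [pow_zero, mul_one]
      rw [hyval, ← hβdef]
      ring
    · rw [if_neg (by omega)]
      have hf : Finset.univ.filter (fun k => Cng' n g i k)
          = {(⟨i.val + 1, by omega⟩ : Fin n)} :=
        filter_eq_singleton _ _ (fun k => by
          have hk := k.isLt; simp only [Cng', Fin.ext_iff, Fin.val_mk]; omega)
      rw [hf, Finset.sum_singleton]
      simp only [hvval, Fin.val_mk]
      rw [if_neg (by omega), if_neg (by omega)]
      rw [show i.val + 1 - g = (i.val - g) + 1 from by omega, pow_succ]
      rw [hyval, ← hβdef]
      ring
    · rw [if_neg (by omega)]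
      have hf : Finset.univ.filter (fun k => Cng' n g i k)
          = {(⟨g - 1, by omega⟩ : Fin n)} :=
        filter_eq_singleton _ _ (fun k => by
          have hk := k.isLt; simp only [Cng', Fin.ext_iff, Fin.val_mk]; omega)
      rw [hf, Finset.sum_singleton]
      simp only [hvval, Fin.val_mk]
      rw [hc]
      rw [if_neg (by omega), if_pos (by omega)]
      have e1 : t^(n-1) = t^(g-1)*(t^(n-1-g)*t) := by
        rw [← pow_succ, ← pow_add]; congr 1; omega
      have e2 : t^(n-g) = t^(n-1-g)*t := by rw [← pow_succ]; congr 1; omega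
      have hGy' := hGy
      rw [e1, e2, hyval] at hGy'
      rw [show n - 1 - g = n-1-g from rfl]
      rw [hyval, ← hβdef]
      linear_combination (-β) * hGy'
  -- conclude
  have hM1 : specRad (Aalpha α (Cng n g)) ≤ x :=
    specRad_le_of_posLeftEig (by omega) _ (fun i j => aalpha_nonneg hα0 hα1.le _ i j)
      x (by linarith) w hwpos hwev
  have hM2 : y ≤ specRad (Aalpha α (Cng' n g)) :=
    le_specRad_of_eig _ y (by linarith) v hvne hvev
  show specRad (Aalpha α (Cng n g)) < specRad (Aalpha α (Cng' n g))
  linarith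
end

section
/- Let 1 ≤ k ≤ n−2, 1 ≤ m ≤ n−k−1, and α ∈ [0,1). The digraph K(n,k,m) satisfies λ_α(K(n,k,m)) = [n − 2 − αm + αn + √((1−α)²n² + (6α − 2α² − 4)mn + (2−α)²m² + 4(1−α)km)] / 2. -/
open scoped Classical
open Matrix

theorem charpoly_eval' {R : Type*} [CommRing R] {n : ℕ} (M : Matrix (Fin n) (Fin n) R) (x : R) :
    M.charpoly.eval x = ((x • (1 : Matrix (Fin n) (Fin n) R)) - M).det := by
  rw [Matrix.charpoly, ← Polynomial.coe_evalRingHom, RingHom.map_det]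
  congr 1
  ext i j
  rcases eq_or_ne i j with h | h <;>
    simp [Matrix.charmatrix_apply, Matrix.one_apply, Matrix.diagonal_apply, h]

theorem card_filter_val {n : ℕ} (p : ℕ → Prop) [DecidablePred p] :
    ((Finset.univ : Finset (Fin n)).filter (fun j : Fin n => p (j : ℕ))).card
      = ((Finset.range n).filter p).card := by
  have e : ((Finset.univ : Finset (Fin n)).filter (fun j : Fin n => p (j : ℕ))).map Fin.valEmbedding
      = (Finset.range n).filter p := by
    ext x
    simp only [Finset.mem_map, Finset.mem_filter, Finset.mem_univ, true_and,
      Fin.valEmbedding_apply, Finset.mem_range]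
    constructor
    · rintro ⟨j, hj, rfl⟩; exact ⟨j.isLt, hj⟩
    · rintro ⟨hx, hp⟩; exact ⟨⟨x, hx⟩, hp, rfl⟩
  rw [← e, Finset.card_map]

theorem card_filter_val_lt {n : ℕ} (K : ℕ) (h : K ≤ n) :
    ((Finset.univ : Finset (Fin n)).filter (fun j : Fin n => (j : ℕ) < K)).card = K := by
  rw [card_filter_val (fun j => j < K)]
  have : (Finset.range n).filter (fun j => j < K) = Finset.range K := by
    ext j; simp only [Finset.mem_filter, Finset.mem_range]; omega
  rw [this, Finset.card_range]

theorem keyQ (α M K T s lam : ℝ)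
    (hs : s^2 = (1-α)^2*(M+K+T)^2 + (6*α-2*α^2-4)*M*(M+K+T) + (2-α)^2*M^2 + 4*(1-α)*K*M)
    (hlam : lam = ((M+K+T) - 2 - α*M + α*(M+K+T) + s)/2) :
    (lam - (α*(M+K+T) - 1) - (1-α)*(M+K)) *
      (lam - (α*(M+K+T) - α*M - 1) - (1-α)*T) = (1-α)^2 * T * K := by
  subst hlam
  linear_combination hs/4

theorem row_expand {n : ℕ} (α : ℝ) (G : Fin n → Fin n → Prop) (v : Fin n → ℝ) (i : Fin n) :
    ((Aalpha α G).mulVec v) i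
      = α * (outdeg G i : ℝ) * v i
        + (1 - α) * ∑ j ∈ Finset.univ.filter (fun j => G i j), v j := by
  simp only [Aalpha, Matrix.mulVec, dotProduct, Matrix.add_apply, Matrix.smul_apply,
    Matrix.diagonal_apply, Matrix.of_apply, smul_eq_mul, add_mul]
  rw [Finset.sum_add_distrib]
  congr 1
  · rw [Finset.sum_eq_single i]
    · simp
    · intro j _ hj
      simp [Ne.symm hj]
    · simp
  · rw [Finset.mul_sum, Finset.sum_filter]
    refine Finset.sum_congr rfl fun j _ => ?_
    by_cases h : G i j <;> simp [h]

theorem eig_bound {n : ℕ} (M : Matrix (Fin n) (Fin n) ℝ) (hM : ∀ i j, 0 ≤ M i j)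
    (v : Fin n → ℝ) (hv : ∀ i, 0 < v i) (lam : ℝ) (hev : M.mulVec v = lam • v)
    (μ : ℂ) (hμ : ((M.map (Complex.ofReal)).charpoly).IsRoot μ) : ‖μ‖ ≤ lam := by
  set Mc := M.map (Complex.ofReal : ℝ → ℂ) with hMc
  have hdet : ((μ • (1 : Matrix (Fin n) (Fin n) ℂ)) - Mc).det = 0 := by
    rw [← charpoly_eval']; exact hμ
  obtain ⟨w, hw0, hw⟩ := (Matrix.exists_mulVec_eq_zero_iff).2 hdet
  have h2 : (μ • (1 : Matrix (Fin n) (Fin n) ℂ)).mulVec w = μ • w := by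
    rw [Matrix.smul_mulVec, Matrix.one_mulVec]
  have hweq : Mc.mulVec w = μ • w := by
    have h3 := hw
    rw [sub_mulVec, sub_eq_zero, h2] at h3
    exact h3.symm
  obtain ⟨i0, hi0⟩ : ∃ i, w i ≠ 0 := by
    by_contra h
    push_neg at h
    exact hw0 (funext h)
  have hne : (Finset.univ : Finset (Fin n)).Nonempty := ⟨i0, Finset.mem_univ _⟩
  obtain ⟨i, -, hmax⟩ := Finset.exists_max_image Finset.univ
    (fun j => ‖w j‖ / v j) hne
  have hq : ∀ j, ‖w j‖ ≤ (‖w i‖ / v i) * v j := by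
    intro j
    have h1 := hmax j (Finset.mem_univ j)
    calc ‖w j‖ = (‖w j‖ / v j) * v j := by
          rw [div_mul_cancel₀ _ (hv j).ne']
      _ ≤ (‖w i‖ / v i) * v j :=
          mul_le_mul_of_nonneg_right h1 (hv j).le
  have hdivpos : 0 < ‖w i‖ / v i := by
    have h1 := hmax i0 (Finset.mem_univ i0)
    have h2' : 0 < ‖w i0‖ / v i0 :=
      div_pos (by simpa using hi0) (hv i0)
    exact lt_of_lt_of_le h2' h1
  have hwi : 0 < ‖w i‖ := by
    have := mul_pos hdivpos (hv i)
    rwa [div_mul_cancel₀ _ (hv i).ne'] at this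
  have key : ‖μ‖ * ‖w i‖ ≤ lam * ‖w i‖ := by
    have hrow : μ * w i = ∑ j, Mc i j * w j := by
      have := congrFun hweq i
      simpa [Matrix.mulVec, dotProduct, Pi.smul_apply, smul_eq_mul] using this.symm
    calc ‖μ‖ * ‖w i‖ = ‖∑ j, Mc i j * w j‖ := by
          rw [← norm_mul, hrow]
      _ ≤ ∑ j, ‖Mc i j * w j‖ := norm_sum_le _ _
      _ = ∑ j, M i j * ‖w j‖ := by
          refine Finset.sum_congr rfl fun j _ => ?_
          rw [norm_mul]
          simp [hMc, Matrix.map_apply, Complex.norm_real, Real.norm_eq_abs, abs_of_nonneg (hM i j)]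
      _ ≤ ∑ j, M i j * ((‖w i‖ / v i) * v j) := by
          refine Finset.sum_le_sum fun j _ => mul_le_mul_of_nonneg_left (hq j) (hM i j)
      _ = (‖w i‖ / v i) * ∑ j, M i j * v j := by
          rw [Finset.mul_sum]; refine Finset.sum_congr rfl fun j _ => by ring
      _ = (‖w i‖ / v i) * (lam * v i) := by
          have := congrFun hev i
          simp only [Matrix.mulVec, dotProduct, Pi.smul_apply, smul_eq_mul] at this
          rw [this]
      _ = lam * ‖w i‖ := by
          rw [div_mul_eq_mul_div, mul_div_assoc]
          rw [mul_div_assoc, div_self (hv i).ne', mul_one, mul_comm]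
  exact le_of_mul_le_mul_right key hwi

theorem root_of_eval {n : ℕ} (M : Matrix (Fin n) (Fin n) ℝ) (lam : ℝ)
    (h : M.charpoly.eval lam = 0) :
    ((M.map Complex.ofReal).charpoly).IsRoot ((lam : ℝ) : ℂ) := by
  have hmap : M.map (Complex.ofReal) = M.map (Complex.ofRealHom : ℝ →+* ℂ) := rfl
  rw [Polynomial.IsRoot.def, hmap, Matrix.charpoly_map]
  have h2 : ((lam : ℝ) : ℂ) = Complex.ofRealHom lam := rfl
  rw [h2, Polynomial.eval_map, Polynomial.eval₂_at_apply, h, map_zero]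

theorem specRad_eq {n : ℕ} (M : Matrix (Fin n) (Fin n) ℝ) (lam : ℝ) (hlam0 : 0 < lam)
    (hroot : ((M.map Complex.ofReal).charpoly).IsRoot ((lam : ℝ) : ℂ))
    (hbd : ∀ μ : ℂ, ((M.map Complex.ofReal).charpoly).IsRoot μ → ‖μ‖ ≤ lam) :
    specRad M = lam := by
  unfold specRad
  apply le_antisymm
  · apply Real.sSup_le
    · rintro r ⟨μ, hμ, rfl⟩
      exact hbd μ hμ
    · exact hlam0.le
  · apply le_csSup
    · refine ⟨lam, ?_⟩
      rintro r ⟨μ, hμ, rfl⟩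
      exact hbd μ hμ
    · exact ⟨((lam : ℝ) : ℂ), hroot, by rw [Complex.norm_real, Real.norm_eq_abs, abs_of_pos hlam0]⟩


/-- closed formula for `λ_α(K(n,k,m))`. -/
theorem stmt14 {n k m : ℕ} (hk1 : 1 ≤ k) (hk2 : k ≤ n - 2)
    (hm1 : 1 ≤ m) (hm2 : m ≤ n - k - 1)
    (α : ℝ) (hα0 : 0 ≤ α) (hα1 : α < 1) :
    lamAlpha α (Knkm n k m) =
      ((n : ℝ) - 2 - α * m + α * n +
        Real.sqrt ((1 - α) ^ 2 * (n : ℝ) ^ 2 + (6 * α - 2 * α ^ 2 - 4) * m * n +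
          (2 - α) ^ 2 * (m : ℝ) ^ 2 + 4 * (1 - α) * k * m)) / 2 := by
  have hα1' : (0:ℝ) < 1 - α := by linarith
  have hn3 : 3 ≤ n := by omega
  obtain ⟨t, ht⟩ : ∃ t, t = n - k - m := ⟨_, rfl⟩
  have htkm : m + k + t = n := by omega
  have ht1 : 1 ≤ t := by omega
  have hN : (n:ℝ) = (m:ℝ) + (k:ℝ) + (t:ℝ) := by exact_mod_cast htkm.symm
  obtain ⟨s, hsdef⟩ : ∃ x : ℝ, x = Real.sqrt ((1 - α) ^ 2 * (n : ℝ) ^ 2 +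
      (6 * α - 2 * α ^ 2 - 4) * m * n +
      (2 - α) ^ 2 * (m : ℝ) ^ 2 + 4 * (1 - α) * k * m) := ⟨_, rfl⟩
  rw [← hsdef]
  obtain ⟨lam, hlamdef⟩ : ∃ x : ℝ, x = ((n : ℝ) - 2 - α * m + α * n + s) / 2 := ⟨_, rfl⟩
  rw [← hlamdef]
  -- nonnegativity of the discriminant
  have hΔ0 : (0:ℝ) ≤ (1 - α) ^ 2 * (n : ℝ) ^ 2 + (6 * α - 2 * α ^ 2 - 4) * m * n +
      (2 - α) ^ 2 * (m : ℝ) ^ 2 + 4 * (1 - α) * k * m := by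
    have hk0 : (0:ℝ) ≤ (k:ℝ) := Nat.cast_nonneg k
    have hm0 : (0:ℝ) ≤ (m:ℝ) := Nat.cast_nonneg m
    nlinarith [sq_nonneg ((1 - α) * (n:ℝ) - (2 - α) * (m:ℝ)),
      mul_nonneg (mul_nonneg hα1'.le hk0) hm0]
  have hs2 : s ^ 2 = (1 - α) ^ 2 * (n : ℝ) ^ 2 + (6 * α - 2 * α ^ 2 - 4) * m * n +
      (2 - α) ^ 2 * (m : ℝ) ^ 2 + 4 * (1 - α) * k * m := by
    rw [hsdef]; exact Real.sq_sqrt hΔ0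
  have hs0 : 0 ≤ s := by rw [hsdef]; exact Real.sqrt_nonneg _
  have htR : (1:ℝ) ≤ (t:ℝ) := by exact_mod_cast ht1
  have hkR : (1:ℝ) ≤ (k:ℝ) := by exact_mod_cast hk1
  obtain ⟨a, hadef⟩ : ∃ x : ℝ, x = (1 - α) * (t:ℝ) := ⟨_, rfl⟩
  obtain ⟨c, hcdef⟩ : ∃ x : ℝ, x = lam - (α * (n:ℝ) - 1) - (1 - α) * ((m:ℝ) + (k:ℝ)) := ⟨_, rfl⟩
  have hQ' : c * (lam - (α * (n:ℝ) - α * (m:ℝ) - 1) - (1 - α) * (t:ℝ))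
      = (1 - α)^2 * (t:ℝ) * (k:ℝ) := by
    rw [hcdef, hN]
    apply keyQ α (m:ℝ) (k:ℝ) (t:ℝ) s lam
    · rw [hs2, hN]
      try ring
    · rw [hlamdef, hN]
  have ha0 : 0 < a := by rw [hadef]; nlinarith
  have hc0 : 0 < c := by
    have h4 : (0:ℝ) < 4 * (1 - α)^2 * (t:ℝ) * (k:ℝ) := by
      have h1 : (0:ℝ) < (t:ℝ) := by linarith
      have h2 : (0:ℝ) < (k:ℝ) := by linarith
      have := mul_pos (mul_pos (mul_pos (show (0:ℝ) < 4 by norm_num)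
        (pow_pos hα1' 2)) h1) h2
      linarith
    have hid : s^2 = (2 * (α * (n:ℝ) - 1 + (1 - α) * ((m:ℝ) + (k:ℝ))) -
        ((n:ℝ) - 2 - α * m + α * n))^2 + 4 * (1 - α)^2 * (t:ℝ) * (k:ℝ) := by
      rw [hs2, hN]; ring
    have h5 : (2 * (α * (n:ℝ) - 1 + (1 - α) * ((m:ℝ) + (k:ℝ))) -
        ((n:ℝ) - 2 - α * m + α * n))^2 < s^2 := by
      rw [hid]; linarith
    have habs : |2 * (α * (n:ℝ) - 1 + (1 - α) * ((m:ℝ) + (k:ℝ))) -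
        ((n:ℝ) - 2 - α * m + α * n)| < s := by
      rw [← Real.sqrt_sq hs0, ← Real.sqrt_sq_eq_abs]
      exact Real.sqrt_lt_sqrt (sq_nonneg _) h5
    have hle := le_abs_self (2 * (α * (n:ℝ) - 1 + (1 - α) * ((m:ℝ) + (k:ℝ))) -
        ((n:ℝ) - 2 - α * m + α * n))
    rw [hcdef, hlamdef]
    linarith
  have hlam0 : 0 < lam := by
    have hnR : (3:ℝ) ≤ (n:ℝ) := by exact_mod_cast hn3
    have hmk2 : 2 ≤ m + k := by omega
    have hmkR : (2:ℝ) ≤ (m:ℝ) + (k:ℝ) := by exact_mod_cast hmk2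
    have e1 : α * 3 ≤ α * (n:ℝ) := mul_le_mul_of_nonneg_left hnR hα0
    have e2 : (1 - α) * 2 ≤ (1 - α) * ((m:ℝ) + (k:ℝ)) := mul_le_mul_of_nonneg_left hmkR hα1'.le
    have hx : (0:ℝ) < α * (n:ℝ) - 1 + (1 - α) * ((m:ℝ) + (k:ℝ)) := by linarith
    linarith [hcdef, hc0]
  -- the matrix
  obtain ⟨M, hM⟩ : ∃ M₀, M₀ = Aalpha α (Knkm n k m) := ⟨_, rfl⟩
  -- filter identities
  have hfilter1 : ∀ i : Fin n, (i:ℕ) < m + k →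
      Finset.univ.filter (fun j => Knkm n k m i j) = Finset.univ.erase i := by
    intro i hi
    ext j
    rw [Finset.mem_filter]
    simp only [Finset.mem_filter, Finset.mem_univ, true_and, Finset.mem_erase, and_true, Knkm]
    constructor
    · rintro ⟨h1, -⟩; exact h1.symm
    · intro h1; exact ⟨h1.symm, fun hc => by omega⟩
  have hfilter2 : ∀ i : Fin n, ¬ (i:ℕ) < m + k →
      Finset.univ.filter (fun j => Knkm n k m i j)
        = (Finset.univ.filter (fun j : Fin n => ¬ (j:ℕ) < m)).erase i := by
    intro i hi
    ext j
    rw [Finset.mem_filter]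
    simp only [Finset.mem_filter, Finset.mem_univ, true_and, Finset.mem_erase, Knkm]
    constructor
    · rintro ⟨h1, h2⟩
      exact ⟨h1.symm, fun hc => h2 ⟨by omega, hc⟩⟩
    · rintro ⟨h1, h2⟩
      exact ⟨h1.symm, fun hc => h2 hc.2⟩
  -- cardinalities
  have hcard_m : ((Finset.univ : Finset (Fin n)).filter (fun j : Fin n => (j:ℕ) < m)).card = m :=
    card_filter_val_lt m (by omega)
  have hcard_mk : ((Finset.univ : Finset (Fin n)).filter
      (fun j : Fin n => (j:ℕ) < m + k)).card = m + k :=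
    card_filter_val_lt (m + k) (by omega)
  have hcard_not_m : ((Finset.univ : Finset (Fin n)).filter
      (fun j : Fin n => ¬ (j:ℕ) < m)).card = n - m := by
    have h := Finset.card_filter_add_card_filter_not
      (s := (Finset.univ : Finset (Fin n))) (p := fun j : Fin n => (j:ℕ) < m)
    rw [hcard_m, Finset.card_univ, Fintype.card_fin] at h
    omega
  -- outdegrees
  have hout1 : ∀ i : Fin n, (i:ℕ) < m + k → outdeg (Knkm n k m) i = n - 1 := by
    intro i hi
    rw [outdeg, hfilter1 i hi, Finset.card_erase_of_mem (Finset.mem_univ i),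
      Finset.card_univ, Fintype.card_fin]
  have hout2 : ∀ i : Fin n, ¬ (i:ℕ) < m + k → outdeg (Knkm n k m) i = n - m - 1 := by
    intro i hi
    have hmem : i ∈ (Finset.univ : Finset (Fin n)).filter (fun j : Fin n => ¬ (j:ℕ) < m) := by
      simp only [Finset.mem_filter, Finset.mem_univ, true_and]
      omega
    rw [outdeg, hfilter2 i hi, Finset.card_erase_of_mem hmem, hcard_not_m]
  -- the vector
  obtain ⟨v, hv⟩ : ∃ v₀ : Fin n → ℝ, v₀ = fun i : Fin n =>
      if (i:ℕ) < m + k then a else c := ⟨_, rfl⟩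
  have hvpos : ∀ i, 0 < v i := by
    intro i
    rw [hv]
    dsimp only
    split
    · exact ha0
    · exact hc0
  -- sums
  have hsum_mk : ∑ j ∈ (Finset.univ : Finset (Fin n)).filter (fun j : Fin n => (j:ℕ) < m + k),
      v j = ((m:ℝ) + k) * a := by
    rw [Finset.sum_congr rfl (fun j hj => show v j = a by
      rw [hv]; exact if_pos (Finset.mem_filter.1 hj).2), Finset.sum_const, hcard_mk,
      nsmul_eq_mul]
    push_cast
    ring
  have hsum_all : ∑ j : Fin n, v j = ((m:ℝ) + k) * a + (t:ℝ) * c := by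
    rw [← Finset.sum_filter_add_sum_filter_not Finset.univ (fun j : Fin n => (j:ℕ) < m + k) v,
      hsum_mk]
    congr 1
    rw [Finset.sum_congr rfl (fun j hj => show v j = c by
      rw [hv]; exact if_neg (Finset.mem_filter.1 hj).2), Finset.sum_const]
    have hc' : ((Finset.univ : Finset (Fin n)).filter
        (fun j : Fin n => ¬ (j:ℕ) < m + k)).card = t := by
      have h := Finset.card_filter_add_card_filter_not
        (s := (Finset.univ : Finset (Fin n))) (p := fun j : Fin n => (j:ℕ) < m + k)
      rw [hcard_mk, Finset.card_univ, Fintype.card_fin] at h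
      omega
    rw [hc', nsmul_eq_mul]
  have hsum_m : ∑ j ∈ (Finset.univ : Finset (Fin n)).filter (fun j : Fin n => (j:ℕ) < m),
      v j = (m:ℝ) * a := by
    rw [Finset.sum_congr rfl (fun j hj => show v j = a by
      rw [hv]
      exact if_pos (by have := (Finset.mem_filter.1 hj).2; omega)), Finset.sum_const,
      hcard_m, nsmul_eq_mul]
  have hsum_not_m : ∑ j ∈ (Finset.univ : Finset (Fin n)).filter (fun j : Fin n => ¬ (j:ℕ) < m),
      v j = (k:ℝ) * a + (t:ℝ) * c := by
    have h := Finset.sum_filter_add_sum_filter_not Finset.univ (fun j : Fin n => (j:ℕ) < m) v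
    rw [hsum_m, hsum_all] at h
    have hmk : ((m:ℝ) + k) * a = (m:ℝ) * a + (k:ℝ) * a := by ring
    linarith [h]
  -- the eigen equation
  have hev : M.mulVec v = lam • v := by
    funext i
    rw [hM, row_expand α (Knkm n k m) v i, Pi.smul_apply, smul_eq_mul]
    by_cases hi : (i:ℕ) < m + k
    · rw [hout1 i hi, hfilter1 i hi,
        Finset.sum_erase_eq_sub (Finset.mem_univ i), hsum_all]
      have hvi : v i = a := by rw [hv]; exact if_pos hi
      rw [hvi]
      have hc1 : ((n - 1 : ℕ) : ℝ) = (n:ℝ) - 1 := by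
        rw [Nat.cast_sub (by omega)]; norm_num
      rw [hc1, hadef, hcdef]
      ring
    · rw [hout2 i hi, hfilter2 i hi]
      have hmem : i ∈ (Finset.univ : Finset (Fin n)).filter (fun j : Fin n => ¬ (j:ℕ) < m) := by
        simp only [Finset.mem_filter, Finset.mem_univ, true_and]
        omega
      rw [Finset.sum_erase_eq_sub hmem, hsum_not_m]
      have hvi : v i = c := by rw [hv]; exact if_neg hi
      rw [hvi]
      have hc2 : ((n - m - 1 : ℕ) : ℝ) = (n:ℝ) - m - 1 := by
        rw [Nat.cast_sub (by omega), Nat.cast_sub (by omega)]; norm_num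
      rw [hc2, hadef]
      linear_combination -hQ'
  -- nonneg entries
  have hMnn : ∀ i j, 0 ≤ M i j := by
    intro i j
    rw [hM]
    simp only [Aalpha, Matrix.add_apply, Matrix.smul_apply, Matrix.diagonal_apply,
      Matrix.of_apply, smul_eq_mul]
    apply add_nonneg
    · rcases eq_or_ne i j with h | h
      · rw [if_pos h]
        exact mul_nonneg hα0 (Nat.cast_nonneg _)
      · rw [if_neg h, mul_zero]
    · split
      · linarith
      · rw [mul_zero]
  -- lam is a root
  have hvne : v ≠ 0 := by
    intro h0
    have := hvpos ⟨0, by omega⟩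
    rw [h0] at this
    simp at this
  have hdet0 : M.charpoly.eval lam = 0 := by
    rw [charpoly_eval']
    apply Matrix.exists_mulVec_eq_zero_iff.mp
    refine ⟨v, hvne, ?_⟩
    rw [sub_mulVec, Matrix.smul_mulVec, Matrix.one_mulVec, hev, sub_self]
  have hroot : ((M.map Complex.ofReal).charpoly).IsRoot ((lam : ℝ) : ℂ) :=
    root_of_eval M lam hdet0
  -- conclusion
  show lamAlpha α (Knkm n k m) = lam
  have hunf : lamAlpha α (Knkm n k m) = specRad (Aalpha α (Knkm n k m)) := rfl
  rw [hunf, ← hM]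
  exact specRad_eq M lam hlam0 hroot (fun μ hμ => eig_bound M hMnn v hvpos lam hev μ hμ)
end

section
/- For each 1 ≤ k ≤ n−2 and α ∈ [0,1), the minimum A_α spectral radius among strongly connected digraphs on n vertices with vertex connectivity k, and also among those with arc connectivity k, equals k, and any digraph attaining this minimum is k-regular (every vertex has outdegree k and indegree k). -/
open scoped Classical
open Matrix

section Aux19
open Polynomial Filter

lemma charpoly_eval_eq {m : Type*} [Fintype m] [DecidableEq m] (M : Matrix m m ℂ) (x : ℂ) :
    M.charpoly.eval x = (x • (1 : Matrix m m ℂ) - M).det := by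
  rw [Matrix.charpoly, Polynomial.eval, ← Polynomial.coe_eval₂RingHom, RingHom.map_det]
  congr 1
  ext i j
  by_cases h : i = j
  · subst h
    simp [Matrix.charmatrix_apply_eq, Matrix.one_apply]
  · simp [Matrix.charmatrix_apply_ne _ _ _ h, Matrix.one_apply_ne h]

lemma mem_spectrum_iff_isRoot {n : ℕ} (M : Matrix (Fin n) (Fin n) ℂ) (μ : ℂ) :
    μ ∈ spectrum ℂ M ↔ M.charpoly.IsRoot μ := by
  rw [spectrum.mem_iff, Matrix.isUnit_iff_isUnit_det, isUnit_iff_ne_zero, not_not,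
      Polynomial.IsRoot, charpoly_eval_eq, Algebra.algebraMap_eq_smul_one]

lemma rootSet_spec {m : Type*} [Fintype m] [DecidableEq m] (M : Matrix m m ℝ) :
    {r : ℝ | ∃ μ : ℂ, (M.map Complex.ofReal).charpoly.IsRoot μ ∧ r = ‖μ‖} =
      (fun μ : ℂ => ‖μ‖) '' {μ : ℂ | (M.map Complex.ofReal).charpoly.IsRoot μ} := by
  ext r
  simp [eq_comm, Set.mem_image]

lemma rootModSet_finite {m : Type*} [Fintype m] [DecidableEq m] (M : Matrix m m ℝ) :
    ({r : ℝ | ∃ μ : ℂ, (M.map Complex.ofReal).charpoly.IsRoot μ ∧ r = ‖μ‖}).Finite := by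
  rw [rootSet_spec]
  exact (Polynomial.finite_setOf_isRoot (Matrix.charpoly_monic _).ne_zero).image _

lemma le_specRad_of_root {m : Type*} [Fintype m] [DecidableEq m] (M : Matrix m m ℝ)
    {μ : ℂ} (h : (M.map Complex.ofReal).charpoly.IsRoot μ) :
    ‖μ‖ ≤ specRad M := by
  refine le_csSup ((rootModSet_finite M).bddAbove) ⟨μ, h, rfl⟩

lemma specRad_le {m : Type*} [Fintype m] [DecidableEq m] (M : Matrix m m ℝ) {s : ℝ}
    (h0 : 0 ≤ s)
    (h : ∀ μ : ℂ, (M.map Complex.ofReal).charpoly.IsRoot μ → ‖μ‖ ≤ s) :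
    specRad M ≤ s := by
  apply Real.sSup_le _ h0
  rintro r ⟨μ, hμ, rfl⟩
  exact h μ hμ

lemma hasEigen_of_root {n : ℕ} (M : Matrix (Fin n) (Fin n) ℂ) {μ : ℂ}
    (h : M.charpoly.IsRoot μ) : Module.End.HasEigenvalue (Matrix.toLin' M) μ := by
  rw [Polynomial.IsRoot, charpoly_eval_eq] at h
  obtain ⟨v, hv, hmv⟩ := (Matrix.exists_mulVec_eq_zero_iff).2 h
  refine Module.End.hasEigenvalue_of_hasEigenvector (x := v) ⟨Module.End.mem_eigenspace_iff.2 ?_, hv⟩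
  rw [Matrix.toLin'_apply]
  have := congrArg (fun w => M.mulVec v + w) hmv
  simpa [Matrix.sub_mulVec, Matrix.smul_mulVec, Matrix.one_mulVec] using this.symm

lemma root_abs_le_of_rowsum {n : ℕ} (M : Matrix (Fin n) (Fin n) ℝ)
    (hpos : ∀ i j, 0 ≤ M i j) {s : ℝ} (hrow : ∀ i, ∑ j, M i j = s)
    {μ : ℂ} (h : (M.map Complex.ofReal).charpoly.IsRoot μ) : ‖μ‖ ≤ s := by
  obtain ⟨i, hi⟩ := eigenvalue_mem_ball (hasEigen_of_root _ h)
  rw [Metric.mem_closedBall, Complex.dist_eq] at hi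
  have hoff : ∑ j ∈ Finset.univ.erase i, ‖(M.map Complex.ofReal) i j‖ = s - M i i := by
    have : ∀ j, ‖(M.map Complex.ofReal) i j‖ = M i j := by
      intro j
      simp [Matrix.map_apply, Complex.norm_real, abs_of_nonneg (hpos i j)]
    simp only [this]
    rw [← hrow i]
    exact Finset.sum_erase_eq_sub (Finset.mem_univ i)
  have hdiag : ‖(M.map Complex.ofReal) i i‖ = M i i := by
    simp [Matrix.map_apply, Complex.norm_real, abs_of_nonneg (hpos i i)]
  calc ‖μ‖ = ‖(μ - (M.map Complex.ofReal) i i) + (M.map Complex.ofReal) i i‖ := by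
        rw [sub_add_cancel]
    _ ≤ ‖μ - (M.map Complex.ofReal) i i‖ + ‖(M.map Complex.ofReal) i i‖ := norm_add_le _ _
    _ ≤ (s - M i i) + M i i := by
        rw [hdiag]
        exact add_le_add (le_trans (by exact hi) hoff.le) le_rfl
    _ = s := by ring

lemma isRoot_rowsum {n : ℕ} (hn : 0 < n) (M : Matrix (Fin n) (Fin n) ℝ)
    {s : ℝ} (hrow : ∀ i, ∑ j, M i j = s) :
    (M.map Complex.ofReal).charpoly.IsRoot (s : ℂ) := by
  rw [Polynomial.IsRoot, charpoly_eval_eq]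
  rw [← Matrix.exists_mulVec_eq_zero_iff]
  refine ⟨fun _ => 1, ?_, ?_⟩
  · intro h
    have := congrFun h ⟨0, hn⟩
    simp at this
  · ext i
    have h1 : ∀ x, ((s : ℂ) • (1 : Matrix (Fin n) (Fin n) ℂ) - M.map Complex.ofReal) i x
        = (s : ℂ) * (1 : Matrix (Fin n) (Fin n) ℂ) i x - ((M i x : ℝ) : ℂ) := by
      intro x; simp [Matrix.sub_apply, Matrix.smul_apply, Matrix.map_apply, smul_eq_mul]
    show (Matrix.mulVec _ _) i = 0
    rw [Matrix.mulVec, dotProduct]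
    simp only [h1, mul_one, Pi.zero_apply]
    rw [Finset.sum_sub_distrib, ← Finset.mul_sum]
    have h2 : ∑ x, (1 : Matrix (Fin n) (Fin n) ℂ) i x = 1 := by
      simp [Matrix.one_apply, Finset.sum_ite_eq]
    rw [h2, mul_one, ← Complex.ofReal_sum, hrow i, sub_self]

lemma specRad_eq_of_rowsum {n : ℕ} (hn : 0 < n) (M : Matrix (Fin n) (Fin n) ℝ)
    (hpos : ∀ i j, 0 ≤ M i j) {s : ℝ} (hrow : ∀ i, ∑ j, M i j = s) :
    specRad M = s := by
  have hs : 0 ≤ s := by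
    rw [← hrow ⟨0, hn⟩]
    exact Finset.sum_nonneg fun j _ => hpos _ j
  refine le_antisymm (specRad_le M hs (fun μ h => root_abs_le_of_rowsum M hpos hrow h)) ?_
  have := le_specRad_of_root M (isRoot_rowsum hn M hrow)
  simpa [Complex.norm_real, Real.norm_eq_abs, abs_of_nonneg hs] using this

section Gelfand
attribute [local instance] Matrix.linftyOpNormedRing Matrix.linftyOpNormedAlgebra
  Matrix.linftyOpNormedAddCommGroup

lemma pow_entry_nonneg {n : ℕ} {M : Matrix (Fin n) (Fin n) ℝ} (hpos : ∀ i j, 0 ≤ M i j) :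
    ∀ t i j, 0 ≤ (M ^ t) i j := by
  intro t
  induction t with
  | zero => intro i j; by_cases h : i = j <;> simp [pow_zero, Matrix.one_apply, h]
  | succ t ih =>
    intro i j
    rw [pow_succ, Matrix.mul_apply]
    exact Finset.sum_nonneg fun x _ => mul_nonneg (ih i x) (hpos x j)

lemma rowsum_pow_ge {n : ℕ} {M : Matrix (Fin n) (Fin n) ℝ} (hpos : ∀ i j, 0 ≤ M i j)
    {a : ℝ} (ha : 0 ≤ a) (hrow : ∀ i, a ≤ ∑ j, M i j) :
    ∀ t i, a ^ t ≤ ∑ j, (M ^ t) i j := by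
  intro t
  induction t with
  | zero => intro i; simp [Matrix.one_apply, Finset.sum_ite_eq]
  | succ t ih =>
    intro i
    have : ∑ j, (M ^ (t + 1)) i j = ∑ x, M i x * ∑ j, (M ^ t) x j := by
      rw [pow_succ']
      simp only [Matrix.mul_apply, Finset.mul_sum]
      rw [Finset.sum_comm]
    rw [this, pow_succ']
    calc a * a ^ t ≤ (∑ x, M i x) * a ^ t :=
          mul_le_mul_of_nonneg_right (hrow i) (pow_nonneg ha t)
      _ = ∑ x, M i x * a ^ t := Finset.sum_mul _ _ _
      _ ≤ ∑ x, M i x * ∑ j, (M ^ t) x j :=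
          Finset.sum_le_sum fun x _ => mul_le_mul_of_nonneg_left (ih x) (hpos i x)

lemma map_pow_ofReal {n : ℕ} (M : Matrix (Fin n) (Fin n) ℝ) (t : ℕ) :
    (M.map Complex.ofReal) ^ t = (M ^ t).map Complex.ofReal := by
  have h := map_pow (RingHom.mapMatrix (m := Fin n) Complex.ofRealHom) M t
  exact h.symm

lemma exists_root_abs_ge {n : ℕ} (hn : 0 < n) (M : Matrix (Fin n) (Fin n) ℝ)
    (hpos : ∀ i j, 0 ≤ M i j) {r : ℝ} (hr : 0 ≤ r) {N : ℕ} (hN : 0 < N)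
    (hrow : ∀ i, r ^ N ≤ ∑ j, (M ^ N) i j) :
    ∃ μ : ℂ, (M.map Complex.ofReal).charpoly.IsRoot μ ∧ r ≤ ‖μ‖ := by
  haveI : Nonempty (Fin n) := ⟨⟨0, hn⟩⟩
  haveI : CompleteSpace (Matrix (Fin n) (Fin n) ℂ) := FiniteDimensional.complete ℂ _
  set Mc := M.map Complex.ofReal with hMc
  have hnormge : ∀ t : ℕ, r ^ t ≤ ‖Mc ^ t‖ → True := fun _ _ => trivial
  have hrowt : ∀ m : ℕ, ∀ i, r ^ (N * (m + 1)) ≤ ∑ j, (M ^ (N * (m + 1))) i j := by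
    intro m i
    rw [pow_mul, pow_mul]
    exact rowsum_pow_ge (pow_entry_nonneg hpos N) (pow_nonneg hr N) hrow (m + 1) i
  have hnorm : ∀ m : ℕ, r ^ (N * (m + 1)) ≤ ‖Mc ^ (N * (m + 1))‖ := by
    intro m
    set t := N * (m + 1)
    set i : Fin n := ⟨0, hn⟩
    calc r ^ t ≤ ∑ j, (M ^ t) i j := hrowt m i
      _ = ∑ j, ‖(Mc ^ t) i j‖ := by
          rw [map_pow_ofReal]
          refine Finset.sum_congr rfl fun j _ => ?_
          simp [Matrix.map_apply, Complex.norm_real, abs_of_nonneg (pow_entry_nonneg hpos t i j)]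
      _ ≤ ‖Mc ^ t‖ := by
          rw [Matrix.linfty_opNorm_def]
          push_cast
          have h1 : (∑ j, ‖(Mc ^ t) i j‖₊) ≤ (Finset.univ.sup fun i => ∑ j, ‖(Mc ^ t) i j‖₊) :=
            Finset.le_sup (f := fun i => ∑ j, ‖(Mc ^ t) i j‖₊) (Finset.mem_univ i)
          have h2 := NNReal.coe_le_coe.2 h1
          push_cast at h2
          exact h2
  have hkey : ∀ m : ℕ, ENNReal.ofReal r ≤
      (‖Mc ^ (N * (m + 1))‖₊ : ENNReal) ^ (1 / (N * (m + 1) : ℕ) : ℝ) := by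
    intro m
    set t := N * (m + 1) with ht
    have htpos : 0 < t := Nat.mul_pos hN (Nat.succ_pos m)
    have h1 : (ENNReal.ofReal r) ^ (t : ℕ) ≤ (‖Mc ^ t‖₊ : ENNReal) := by
      rw [← ENNReal.ofReal_pow hr]
      rw [← enorm_eq_nnnorm, ← ofReal_norm]
      exact ENNReal.ofReal_le_ofReal (hnorm m)
    have h2 := ENNReal.rpow_le_rpow h1 (by positivity : (0:ℝ) ≤ 1 / (t : ℕ))
    rw [← ENNReal.rpow_natCast (ENNReal.ofReal r) t, ← ENNReal.rpow_mul] at h2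
    rw [mul_one_div, div_self (by exact_mod_cast htpos.ne' : (t : ℝ) ≠ 0), ENNReal.rpow_one] at h2
    exact h2
  have hsub : Filter.Tendsto (fun m : ℕ => N * (m + 1)) Filter.atTop Filter.atTop := by
    apply Filter.tendsto_atTop_mono (f := fun m : ℕ => m) _ Filter.tendsto_id
    intro m
    calc m ≤ m + 1 := Nat.le_succ m
      _ ≤ N * (m + 1) := Nat.le_mul_of_pos_left _ hN
  have hg := (spectrum.pow_nnnorm_pow_one_div_tendsto_nhds_spectralRadius Mc).comp hsub
  have hlim : ENNReal.ofReal r ≤ spectralRadius ℂ Mc := ge_of_tendsto' hg hkey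
  obtain ⟨z, hz, hzeq⟩ := spectrum.exists_nnnorm_eq_spectralRadius Mc
  refine ⟨z, (mem_spectrum_iff_isRoot Mc z).1 hz, ?_⟩
  rw [← hzeq] at hlim
  have : r ≤ ‖z‖ := by
    have := (ENNReal.ofReal_le_iff_le_toReal (by simp)).1 hlim
    simpa using this
  exact this

end Gelfand

lemma specRad_ge_of_rowsum {n : ℕ} (hn : 0 < n) (M : Matrix (Fin n) (Fin n) ℝ)
    (hpos : ∀ i j, 0 ≤ M i j) {s : ℝ} (hs : 0 ≤ s) (hrow : ∀ i, s ≤ ∑ j, M i j) :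
    s ≤ specRad M := by
  obtain ⟨μ, hroot, hle⟩ := exists_root_abs_ge hn M hpos hs (N := 1) one_pos
    (by intro i; rw [pow_one, pow_one]; exact hrow i)
  exact hle.trans (le_specRad_of_root M hroot)

lemma specRad_gt_of_rowsum {n : ℕ} (hn : 0 < n) (M : Matrix (Fin n) (Fin n) ℝ)
    (hpos : ∀ i j, 0 ≤ M i j) {s : ℝ} (hs : 1 ≤ s)
    (hrow : ∀ i, s ≤ ∑ j, M i j) (j0 : Fin n) (hj0 : s + 1 ≤ ∑ j, M j0 j)
    {c : ℝ} (hc0 : 0 < c) (hc1 : c ≤ 1)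
    (hreach : ∀ i, ∃ d : ℕ, c ^ d ≤ (M ^ d) i j0) :
    s < specRad M := by
  have hs0 : (0:ℝ) ≤ s := le_trans zero_le_one hs
  classical
  choose d hd using hreach
  set D := Finset.univ.sup d with hD
  set N := D + 1 with hN
  have hdD : ∀ i, d i ≤ D := fun i => Finset.le_sup (Finset.mem_univ i)
  set β := c ^ D with hβ
  have hβ0 : 0 < β := pow_pos hc0 D
  -- row sums of M ^ N are at least s ^ N + β
  have hrowN : ∀ i, s ^ N + β ≤ ∑ j, (M ^ N) i j := by
    intro i
    set e := d i with he
    have heD : e ≤ D := hdD i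
    have heN : e + 1 ≤ N := by omega
    set u := N - e - 1 with hu
    have hNe : N - e = u + 1 := by omega
    have hsplit : N = e + (u + 1) := by omega
    -- row sums of M ^ (u+1), with extra for j0
    have hrowu : ∀ x, s ^ u ≤ ∑ j, (M ^ u) x j := rowsum_pow_ge hpos hs0 hrow u
    have hkeyj0 : s ^ (u + 1) + s ^ u ≤ ∑ j, (M ^ (u + 1)) j0 j := by
      have : ∑ j, (M ^ (u + 1)) j0 j = ∑ x, M j0 x * ∑ j, (M ^ u) x j := by
        rw [pow_succ']
        simp only [Matrix.mul_apply, Finset.mul_sum]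
        rw [Finset.sum_comm]
      rw [this]
      calc s ^ (u + 1) + s ^ u = (s + 1) * s ^ u := by ring
        _ ≤ (∑ x, M j0 x) * s ^ u := mul_le_mul_of_nonneg_right hj0 (pow_nonneg hs0 u)
        _ = ∑ x, M j0 x * s ^ u := Finset.sum_mul _ _ _
        _ ≤ ∑ x, M j0 x * ∑ j, (M ^ u) x j :=
            Finset.sum_le_sum fun x _ => mul_le_mul_of_nonneg_left (hrowu x) (hpos j0 x)
    have hrowu1 : ∀ x, s ^ (u + 1) ≤ ∑ j, (M ^ (u + 1)) x j := rowsum_pow_ge hpos hs0 hrow (u + 1)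
    -- now split M ^ N = M ^ e * M ^ (u + 1)
    have hsum : ∑ j, (M ^ N) i j = ∑ x, (M ^ e) i x * ∑ j, (M ^ (u + 1)) x j := by
      rw [hsplit, pow_add]
      simp only [Matrix.mul_apply, Finset.mul_sum]
      rw [Finset.sum_comm]
    rw [hsum]
    have hsplit2 : ∀ x : Fin n, x ∈ Finset.univ → (M ^ e) i x * s ^ (u + 1)
        + (if x = j0 then (M ^ e) i x * s ^ u else 0) ≤ (M ^ e) i x * ∑ j, (M ^ (u + 1)) x j := by
      intro x _
      by_cases hx : x = j0
      · subst hx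
        simp only [if_pos rfl]
        calc (M ^ e) i x * s ^ (u + 1) + (M ^ e) i x * s ^ u
            = (M ^ e) i x * (s ^ (u + 1) + s ^ u) := by ring
          _ ≤ (M ^ e) i x * ∑ j, (M ^ (u + 1)) x j :=
              mul_le_mul_of_nonneg_left hkeyj0 (pow_entry_nonneg hpos e i x)
      · simp only [if_neg hx, add_zero]
        exact mul_le_mul_of_nonneg_left (hrowu1 x) (pow_entry_nonneg hpos e i x)
    have := Finset.sum_le_sum hsplit2
    rw [Finset.sum_add_distrib, Finset.sum_ite_eq' Finset.univ j0] at this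
    simp only [Finset.mem_univ, if_pos] at this
    refine le_trans ?_ this
    have h1 : s ^ N ≤ ∑ x, (M ^ e) i x * s ^ (u + 1) := by
      rw [← Finset.sum_mul]
      calc s ^ N = s ^ e * s ^ (u + 1) := by rw [← pow_add, ← hsplit]
        _ ≤ (∑ x, (M ^ e) i x) * s ^ (u + 1) :=
            mul_le_mul_of_nonneg_right (rowsum_pow_ge hpos hs0 hrow e i) (pow_nonneg hs0 _)
    have h2 : β ≤ (M ^ e) i j0 * s ^ u := by
      calc β = c ^ D := rfl
        _ ≤ c ^ e := pow_le_pow_of_le_one hc0.le hc1 heD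
        _ ≤ (M ^ e) i j0 := hd i
        _ = (M ^ e) i j0 * 1 := (mul_one _).symm
        _ ≤ (M ^ e) i j0 * s ^ u := by
            refine mul_le_mul_of_nonneg_left (one_le_pow₀ hs) (pow_entry_nonneg hpos e i j0)
    linarith
  -- conclude via exists_root_abs_ge
  set r := (s ^ N + β) ^ ((N : ℝ)⁻¹) with hr
  have hbase : (0:ℝ) ≤ s ^ N + β := by positivity
  have hrpow : r ^ N = s ^ N + β := Real.rpow_inv_natCast_pow hbase (by omega)
  have hr0 : 0 ≤ r := Real.rpow_nonneg hbase _
  have hrs : s < r := by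
    have := Real.rpow_lt_rpow (by positivity : (0:ℝ) ≤ s ^ N)
      (by linarith : s ^ N < s ^ N + β) (by positivity : (0:ℝ) < ((N:ℝ)⁻¹))
    rwa [Real.pow_rpow_inv_natCast hs0 (by omega)] at this
  obtain ⟨μ, hroot, hle⟩ := exists_root_abs_ge hn M hpos hr0 (Nat.succ_pos D)
    (by intro i; rw [hrpow]; exact hrowN i)
  exact lt_of_lt_of_le hrs (hle.trans (le_specRad_of_root M hroot))

variable {n : ℕ} {G : Fin n → Fin n → Prop} {α : ℝ}

lemma Aalpha_apply (i j : Fin n) :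
    Aalpha α G i j = α * (Matrix.diagonal (fun i => (outdeg G i : ℝ))) i j
      + (1 - α) * (if G i j then (1:ℝ) else 0) := by
  simp [Aalpha]

lemma Aalpha_nonneg (hα0 : 0 ≤ α) (hα1 : α < 1) (i j : Fin n) : 0 ≤ Aalpha α G i j := by
  rw [Aalpha_apply]
  have h1 : (0:ℝ) ≤ (Matrix.diagonal (fun i => (outdeg G i : ℝ))) i j := by
    by_cases h : i = j <;> simp [h, Matrix.diagonal_apply]
  have h2 : (0:ℝ) ≤ (if G i j then (1:ℝ) else 0) := by positivity
  have := mul_nonneg hα0 h1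
  have := mul_nonneg (by linarith : (0:ℝ) ≤ 1 - α) h2
  linarith

lemma Aalpha_rowsum (i : Fin n) : ∑ j, Aalpha α G i j = (outdeg G i : ℝ) := by
  simp only [Aalpha_apply]
  rw [Finset.sum_add_distrib, ← Finset.mul_sum, ← Finset.mul_sum]
  have h1 : ∑ j, (Matrix.diagonal (fun i => (outdeg G i : ℝ))) i j = (outdeg G i : ℝ) := by
    simp [Matrix.diagonal_apply, Finset.sum_ite_eq]
  have h2 : ∑ j, (if G i j then (1:ℝ) else 0) = (outdeg G i : ℝ) := by
    rw [Finset.sum_boole, outdeg]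
  rw [h1, h2]
  ring

lemma Aalpha_entry_ge (hα1 : α < 1) {a b : Fin n} (hab : a ≠ b) (h : G a b) :
    1 - α ≤ Aalpha α G a b := by
  rw [Aalpha_apply, Matrix.diagonal_apply_ne _ hab, if_pos h]
  ring_nf
  nlinarith [le_refl α]

lemma Aalpha_reach (hα0 : 0 ≤ α) (hα1 : α < 1) (hloop : ∀ i, ¬ G i i)
    {i j : Fin n} (h : Relation.ReflTransGen G i j) :
    ∃ d : ℕ, (1 - α) ^ d ≤ ((Aalpha α G) ^ d) i j := by
  induction h using Relation.ReflTransGen.head_induction_on with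
  | refl => exact ⟨0, by simp⟩
  | head hab _ ih =>
    obtain ⟨d, hd⟩ := ih
    rename_i a b _
    refine ⟨d + 1, ?_⟩
    have hne : a ≠ b := fun hh => hloop a (hh ▸ hab)
    have hterm : (1 - α) * (1 - α) ^ d ≤ (Aalpha α G) a b * ((Aalpha α G) ^ d) b j := by
      apply mul_le_mul (Aalpha_entry_ge hα1 hne hab) hd (pow_nonneg (by linarith) d)
      exact le_trans (by linarith) (Aalpha_entry_ge hα1 hne hab)
    calc (1 - α) ^ (d + 1) = (1 - α) * (1 - α) ^ d := by ring
      _ ≤ (Aalpha α G) a b * ((Aalpha α G) ^ d) b j := hterm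
      _ ≤ ∑ x, (Aalpha α G) a x * ((Aalpha α G) ^ d) x j := by
          apply Finset.single_le_sum (f := fun x => (Aalpha α G) a x * ((Aalpha α G) ^ d) x j)
            (fun x _ => mul_nonneg (Aalpha_nonneg hα0 hα1 a x)
              (pow_entry_nonneg (Aalpha_nonneg hα0 hα1) d x j)) (Finset.mem_univ b)
      _ = ((Aalpha α G) ^ (d + 1)) a j := by rw [pow_succ', Matrix.mul_apply]

end Aux19

section Aux19b

section Modular
variable {n : ℕ}

def dd {n : ℕ} (i j : Fin n) : ℕ := (j.val + n - i.val) % n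

def shiftv (hn : 0 < n) (i : Fin n) (t : ℕ) : Fin n := ⟨(i.val + t) % n, Nat.mod_lt _ hn⟩

lemma dd_lt (hn : 0 < n) (i j : Fin n) : dd i j < n := Nat.mod_lt _ hn

lemma dd_shift (hn : 0 < n) (i : Fin n) {t : ℕ} (ht : t < n) : dd i (shiftv hn i t) = t := by
  unfold dd shiftv
  simp only
  rcases Nat.lt_or_ge (i.val + t) n with h | h
  · rw [Nat.mod_eq_of_lt h]
    have h2 : i.val + t + n - i.val = t + n := by omega
    rw [h2, Nat.add_mod_right, Nat.mod_eq_of_lt ht]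
  · have hi : i.val < n := i.isLt
    have e1 : (i.val + t) % n = i.val + t - n := by
      rw [Nat.mod_eq_sub_mod h]
      exact Nat.mod_eq_of_lt (by omega)
    rw [e1]
    have h2 : i.val + t - n + n - i.val = t := by omega
    rw [h2, Nat.mod_eq_of_lt ht]

lemma shift_dd (hn : 0 < n) (i j : Fin n) : shiftv hn i (dd i j) = j := by
  unfold dd shiftv
  apply Fin.ext
  simp only
  have hi : i.val < n := i.isLt
  have hj : j.val < n := j.isLt
  rcases le_or_gt i.val j.val with h | h
  · have h2 : j.val + n - i.val = (j.val - i.val) + n := by omega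
    rw [h2, Nat.add_mod_right, Nat.mod_eq_of_lt (by omega : j.val - i.val < n)]
    have h3 : i.val + (j.val - i.val) = j.val := by omega
    rw [h3, Nat.mod_eq_of_lt hj]
  · rw [Nat.mod_eq_of_lt (by omega : j.val + n - i.val < n)]
    have h3 : i.val + (j.val + n - i.val) = j.val + n := by omega
    rw [h3, Nat.add_mod_right, Nat.mod_eq_of_lt hj]

lemma dd_self (hn : 0 < n) (i : Fin n) : dd i i = 0 := by
  unfold dd
  have : i.val + n - i.val = n := by omega
  rw [this, Nat.mod_self]

lemma dd_eq_zero_iff (hn : 0 < n) {i j : Fin n} : dd i j = 0 ↔ i = j := by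
  constructor
  · intro h
    have := shift_dd hn i j
    rw [h] at this
    apply Fin.ext
    have : ((i.val + 0) % n) = j.val := congrArg Fin.val this
    rwa [Nat.add_zero, Nat.mod_eq_of_lt i.isLt] at this
  · rintro rfl; exact dd_self hn i

lemma shift_add (hn : 0 < n) (i : Fin n) (t u : ℕ) :
    shiftv hn (shiftv hn i t) u = shiftv hn i (t + u) := by
  unfold shiftv
  apply Fin.ext
  simp only
  rw [Nat.mod_add_mod, Nat.add_assoc]

lemma shift_inj (hn : 0 < n) (i : Fin n) {t t' : ℕ} (ht : t < n) (ht' : t' < n)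
    (h : shiftv hn i t = shiftv hn i t') : t = t' := by
  rw [← dd_shift hn i ht, ← dd_shift hn i ht', h]

lemma dd_shift_shift (hn : 0 < n) (y : Fin n) {i d : ℕ} (hid : i ≤ d) (hd : d < n) :
    dd (shiftv hn y i) (shiftv hn y d) = d - i := by
  have h1 : shiftv hn y d = shiftv hn (shiftv hn y i) (d - i) := by
    rw [shift_add]
    congr 1
    omega
  rw [h1, dd_shift hn _ (by omega)]

end Modular

----------------------------------------------------------------

section Circ
variable {n k : ℕ}

def circG (n k : ℕ) : Fin n → Fin n → Prop := fun i j => 1 ≤ dd i j ∧ dd i j ≤ k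

variable (hk1 : 1 ≤ k) (hkn : k + 2 ≤ n)

lemma circ_noloop (i : Fin n) : ¬ circG n k i i := by
  intro h
  rcases h with ⟨h1, _⟩
  rw [dd_self i.pos] at h1
  omega

include hkn in
lemma circ_outdeg (i : Fin n) : outdeg (circG n k) i = k := by
  have hn : 0 < n := by omega
  have key : (Finset.univ.filter (fun j => circG n k i j)).card = (Finset.Icc 1 k).card := by
    apply Finset.card_bij' (fun j _ => dd i j) (fun t _ => shiftv hn i t)
    · intro j hj
      simp only [Finset.mem_filter, Finset.mem_univ, true_and] at hj
      simp only [Finset.mem_Icc]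
      exact ⟨hj.1, hj.2⟩
    · intro t ht
      simp only [Finset.mem_Icc] at ht
      simp only [Finset.mem_filter, Finset.mem_univ, true_and]
      have := dd_shift hn i (by omega : t < n)
      exact ⟨by rw [this]; omega, by rw [this]; omega⟩
    · intro j _
      exact shift_dd hn i j
    · intro t ht
      simp only [Finset.mem_Icc] at ht
      exact dd_shift hn i (by omega)
  rw [outdeg, key, Nat.card_Icc]
  omega

include hk1 hkn in
lemma circ_avoid {S : Finset (Fin n)} (hS : S.card < k) : SConnAvoid (circG n k) S := by
  have hn : 0 < n := by omega
  intro u v hu hv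
  have main : ∀ d : ℕ, ∀ u : Fin n, u ∉ S → dd u v = d →
      Relation.ReflTransGen (delVerts (circG n k) S) u v := by
    intro d
    induction d using Nat.strong_induction_on with
    | _ d ih =>
      intro u hu hd
      rcases Nat.eq_zero_or_pos d with h0 | h0
      · have : u = v := (dd_eq_zero_iff hn).1 (by omega)
        exact this ▸ Relation.ReflTransGen.refl
      rcases le_or_gt d k with hdk | hdk
      · exact Relation.ReflTransGen.single ⟨⟨by omega, by omega⟩, hu, hv⟩
      · -- find a step out of S
        have hex : ∃ j ∈ Finset.Icc 1 k, shiftv hn u j ∉ S := by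
          by_contra hcon
          push_neg at hcon
          have hsub : (Finset.Icc 1 k).image (shiftv hn u) ⊆ S := by
            intro x hx
            simp only [Finset.mem_image] at hx
            obtain ⟨j, hj, rfl⟩ := hx
            exact hcon j hj
          have hcard : ((Finset.Icc 1 k).image (shiftv hn u)).card = k := by
            rw [Finset.card_image_of_injOn, Nat.card_Icc]
            · omega
            · intro a ha b hb hab
              simp only [Finset.mem_coe, Finset.mem_Icc] at ha hb
              exact shift_inj hn u (by omega) (by omega) hab
          have := Finset.card_le_card hsub
          omega
        obtain ⟨j, hj, hjS⟩ := hex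
        simp only [Finset.mem_Icc] at hj
        have hedge : circG n k u (shiftv hn u j) := by
          have := dd_shift hn u (by omega : j < n)
          exact ⟨by omega, by omega⟩
        have hdd : dd (shiftv hn u j) v = d - j := by
          have hv' : v = shiftv hn u d := by rw [← hd, shift_dd]
          rw [hv']
          exact dd_shift_shift hn u (by omega) (by
            have := dd_lt hn u v
            omega)
        exact Relation.ReflTransGen.head ⟨hedge, hu, hjS⟩
          (ih (d - j) (by omega) _ hjS hdd)
  exact main (dd u v) u hu rfl

end Circ

section Circ2
variable {n k : ℕ} (hk1 : 1 ≤ k) (hkn : k + 2 ≤ n)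

include hk1 hkn in
lemma circ_sconn : SConn (circG n k) := by
  intro u v
  have h := circ_avoid hk1 hkn (S := ∅) (by simpa using by omega : (∅ : Finset (Fin n)).card < k)
    u v (by simp) (by simp)
  refine Relation.ReflTransGen.mono ?_ u v h
  intro a b hab
  exact hab.1

include hk1 hkn in
lemma circ_vertexConn : vertexConnIs (circG n k) k := by
  have hn : 0 < n := by omega
  constructor
  · set i0 : Fin n := ⟨0, hn⟩
    refine ⟨(Finset.Icc 1 k).image (shiftv hn i0), ?_, ?_⟩
    · rw [Finset.card_image_of_injOn, Nat.card_Icc]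
      · omega
      · intro a ha b hb hab
        simp only [Finset.mem_coe, Finset.mem_Icc] at ha hb
        exact shift_inj hn i0 (by omega) (by omega) hab
    · intro hcon
      set S := (Finset.Icc 1 k).image (shiftv hn i0) with hSdef
      have hmem : ∀ x, x ∈ S ↔ ∃ j, 1 ≤ j ∧ j ≤ k ∧ shiftv hn i0 j = x := by
        intro x
        simp only [hSdef, Finset.mem_image, Finset.mem_Icc]
        constructor
        · rintro ⟨j, ⟨h1, h2⟩, h3⟩; exact ⟨j, h1, h2, h3⟩
        · rintro ⟨j, h1, h2, h3⟩; exact ⟨j, ⟨h1, h2⟩, h3⟩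
      have hi0 : i0 ∉ S := by
        rw [hmem]
        rintro ⟨j, h1, h2, h3⟩
        have := dd_shift hn i0 (by omega : j < n)
        rw [h3, dd_self hn] at this
        omega
      set w : Fin n := shiftv hn i0 (k + 1) with hw
      have hwS : w ∉ S := by
        rw [hmem]
        rintro ⟨j, h1, h2, h3⟩
        have := shift_inj hn i0 (by omega : j < n) (by omega : k + 1 < n) h3
        omega
      have hreach := hcon i0 w hi0 hwS
      rcases Relation.ReflTransGen.cases_head hreach with heq | ⟨b, hstep, -⟩
      · have : dd i0 w = k + 1 := dd_shift hn i0 (by omega)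
        rw [← heq, dd_self hn] at this
        omega
      · obtain ⟨⟨hd1, hd2⟩, -, hbS⟩ := hstep
        apply hbS
        rw [hmem]
        exact ⟨dd i0 b, hd1, hd2, shift_dd hn i0 b⟩
  · intro S hS
    by_contra hcon
    exact hS (circ_avoid hk1 hkn (by omega))

include hk1 hkn in
lemma circ_arc_avoid {T : Finset (Fin n × Fin n)} (hT : T.card < k) :
    SConn (delArcs (circG n k) T) := by
  have hn : 0 < n := by omega
  intro u v
  by_contra hreach
  set R : Set (Fin n) := {w | Relation.ReflTransGen (delArcs (circG n k) T) u w} with hR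
  have hu : u ∈ R := Relation.ReflTransGen.refl
  have hv : v ∉ R := hreach
  have hclosed : ∀ a ∈ R, ∀ b, circG n k a b → b ∉ R → (a, b) ∈ T := by
    intro a ha b hab hb
    by_contra hT'
    exact hb (Relation.ReflTransGen.tail ha ⟨hab, hT'⟩)
  by_cases hcase : ∃ y ∈ R, ∀ j ∈ Finset.Icc 1 k, shiftv hn y j ∈ R
  · -- case A
    obtain ⟨y, hy, hall⟩ := hcase
    have hyv : y ≠ v := fun h => hv (h ▸ hy)
    have hdv1 : 1 ≤ dd y v := by
      rcases Nat.eq_zero_or_pos (dd y v) with h | h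
      · exact absurd ((dd_eq_zero_iff hn).1 h) hyv
      · exact h
    have hdvn : dd y v < n := dd_lt hn y v
    have hex : ∃ d, 1 ≤ d ∧ d < n ∧ shiftv hn y d ∉ R := by
      exact ⟨dd y v, hdv1, hdvn, by rw [shift_dd]; exact hv⟩
    set d := Nat.find hex with hdDef
    obtain ⟨hd1, hdn, hdR⟩ := Nat.find_spec hex
    have hmin : ∀ m, m < d → ¬ (1 ≤ m ∧ m < n ∧ shiftv hn y m ∉ R) := fun m hm =>
      Nat.find_min hex hm
    have hdk : k < d := by
      by_contra hcon
      push_neg at hcon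
      exact hdR (hall d (by simp only [Finset.mem_Icc]; omega))
    -- the k arcs (shiftv y i, shiftv y d) for i ∈ [d-k, d-1]
    have hinj : ∀ i ∈ Finset.Icc (d - k) (d - 1), (shiftv hn y i, shiftv hn y d) ∈ T := by
      intro i hi
      simp only [Finset.mem_Icc] at hi
      have hiR : shiftv hn y i ∈ R := by
        by_contra hcon
        exact hmin i (by omega) ⟨by omega, by omega, hcon⟩
      have hedge : circG n k (shiftv hn y i) (shiftv hn y d) := by
        have := dd_shift_shift hn y (by omega : i ≤ d) (by omega : d < n)
        exact ⟨by omega, by omega⟩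
      exact hclosed _ hiR _ hedge hdR
    have hcard : k ≤ T.card := by
      have h1 : ((Finset.Icc (d - k) (d - 1)).image
          (fun i => (shiftv hn y i, shiftv hn y d))).card = k := by
        rw [Finset.card_image_of_injOn, Nat.card_Icc]
        · omega
        · intro a ha b hb hab
          simp only [Finset.mem_coe, Finset.mem_Icc] at ha hb
          have := congrArg Prod.fst hab
          simp only at this
          exact shift_inj hn y (by omega) (by omega) this
      rw [← h1]
      apply Finset.card_le_card
      intro p hp
      simp only [Finset.mem_image] at hp
      obtain ⟨i, hi, rfl⟩ := hp
      exact hinj i hi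
    omega
  · -- case B
    push_neg at hcase
    set Rf : Finset (Fin n) := Finset.univ.filter (fun x => x ∈ R) with hRf
    have hmemRf : ∀ x, x ∈ Rf ↔ x ∈ R := by
      intro x; simp [hRf]
    set r := Rf.card with hr
    have hr1 : 1 ≤ r := Finset.card_pos.2 ⟨u, (hmemRf u).2 hu⟩
    set Ey : Fin n → Finset ℕ := fun y => (Finset.Icc 1 k).filter (fun j => shiftv hn y j ∉ R)
      with hEy
    have hEy1 : ∀ y ∈ Rf, 1 ≤ (Ey y).card := by
      intro y hy
      obtain ⟨j, hj, hjR⟩ := hcase y ((hmemRf y).1 hy)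
      exact Finset.card_pos.2 ⟨j, Finset.mem_filter.2 ⟨hj, hjR⟩⟩
    have hEy2 : ∀ y ∈ Rf, k + 1 - r ≤ (Ey y).card := by
      intro y hy
      have hsplit : ((Finset.Icc 1 k).filter (fun j => shiftv hn y j ∈ R)).card + (Ey y).card
          = k := by
        have h := Finset.card_filter_add_card_filter_not
          (s := Finset.Icc 1 k) (p := fun j => shiftv hn y j ∈ R)
        simp only [Nat.card_Icc] at h
        have hk' : k + 1 - 1 = k := by omega
        rw [hk'] at h
        exact h
      have hbound : ((Finset.Icc 1 k).filter (fun j => shiftv hn y j ∈ R)).card ≤ r - 1 := by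
        have hsub : ((Finset.Icc 1 k).filter (fun j => shiftv hn y j ∈ R)).image (shiftv hn y)
            ⊆ Rf.erase y := by
          intro x hx
          simp only [Finset.mem_image, Finset.mem_filter, Finset.mem_Icc] at hx
          obtain ⟨j, ⟨⟨hj1, hj2⟩, hjR⟩, rfl⟩ := hx
          refine Finset.mem_erase.2 ⟨?_, (hmemRf _).2 hjR⟩
          intro hcon
          have := dd_shift hn y (by omega : j < n)
          rw [hcon, dd_self hn] at this
          omega
        have hinj : (((Finset.Icc 1 k).filter (fun j => shiftv hn y j ∈ R)).image
            (shiftv hn y)).card = ((Finset.Icc 1 k).filter (fun j => shiftv hn y j ∈ R)).card := by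
          apply Finset.card_image_of_injOn
          intro a ha b hb hab
          simp only [Finset.mem_coe, Finset.mem_filter, Finset.mem_Icc] at ha hb
          exact shift_inj hn y (by omega) (by omega) hab
        have := Finset.card_le_card hsub
        rw [hinj] at this
        rw [Finset.card_erase_of_mem hy] at this
        exact this
      omega
    -- the union of arcs
    have harcs : ∀ y ∈ Rf, ∀ j ∈ Ey y, (y, shiftv hn y j) ∈ T := by
      intro y hy j hj
      simp only [hEy, Finset.mem_filter, Finset.mem_Icc] at hj
      have hedge : circG n k y (shiftv hn y j) := by
        have := dd_shift hn y (by omega : j < n)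
        exact ⟨by omega, by omega⟩
      exact hclosed y ((hmemRf y).1 hy) _ hedge hj.2
    set U : Finset (Fin n × Fin n) := Rf.biUnion (fun y => (Ey y).image
      (fun j => (y, shiftv hn y j))) with hU
    have hUT : U ⊆ T := by
      intro p hp
      simp only [hU, Finset.mem_biUnion, Finset.mem_image] at hp
      obtain ⟨y, hy, j, hj, rfl⟩ := hp
      exact harcs y hy j hj
    have hUcard : U.card = ∑ y ∈ Rf, (Ey y).card := by
      rw [hU, Finset.card_biUnion]
      · refine Finset.sum_congr rfl fun y hy => ?_
        apply Finset.card_image_of_injOn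
        intro a ha b hb hab
        simp only [hEy, Finset.mem_coe, Finset.mem_filter, Finset.mem_Icc] at ha hb
        have := congrArg Prod.snd hab
        simp only at this
        exact shift_inj hn y (by omega) (by omega) this
      · intro x hx y hy hxy
        apply Finset.disjoint_left.2
        intro p hp hq
        simp only [Finset.mem_image] at hp hq
        obtain ⟨a, _, rfl⟩ := hp
        obtain ⟨b, _, hb⟩ := hq
        exact hxy (congrArg Prod.fst hb).symm
    have hsum : ∑ y ∈ Rf, (Ey y).card ≤ T.card := by
      rw [← hUcard]
      exact Finset.card_le_card hUT
    rcases le_or_gt k r with hrk | hrk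
    · have : r ≤ ∑ y ∈ Rf, (Ey y).card := by
        calc r = ∑ _y ∈ Rf, 1 := by simp [hr]
          _ ≤ ∑ y ∈ Rf, (Ey y).card := Finset.sum_le_sum hEy1
      omega
    · have : r * (k + 1 - r) ≤ ∑ y ∈ Rf, (Ey y).card := by
        calc r * (k + 1 - r) = ∑ _y ∈ Rf, (k + 1 - r) := by
              rw [Finset.sum_const, hr, smul_eq_mul]
          _ ≤ ∑ y ∈ Rf, (Ey y).card := Finset.sum_le_sum hEy2
      have hfinal : k ≤ r * (k + 1 - r) := by
        have h1 : k + 1 - r = (k - r) + 1 := by omega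
        rw [h1, Nat.mul_add, Nat.mul_one]
        have h2 : k - r ≤ r * (k - r) := Nat.le_mul_of_pos_left _ hr1
        omega
      omega
end Circ2

section Circ3
variable {n k : ℕ} (hk1 : 1 ≤ k) (hkn : k + 2 ≤ n)

include hk1 hkn in
lemma circ_arcConn : arcConnIs (circG n k) k := by
  have hn : 0 < n := by omega
  constructor
  · set i0 : Fin n := ⟨0, hn⟩
    refine ⟨(Finset.Icc 1 k).image (fun j => (i0, shiftv hn i0 j)), ?_, ?_⟩
    · rw [Finset.card_image_of_injOn, Nat.card_Icc]
      · omega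
      · intro a ha b hb hab
        simp only [Finset.mem_coe, Finset.mem_Icc] at ha hb
        have := congrArg Prod.snd hab
        simp only at this
        exact shift_inj hn i0 (by omega) (by omega) this
    · intro hcon
      set T := (Finset.Icc 1 k).image (fun j => (i0, shiftv hn i0 j)) with hT
      set w : Fin n := shiftv hn i0 1 with hw
      have hreach := hcon i0 w
      rcases Relation.ReflTransGen.cases_head hreach with heq | ⟨b, hstep, -⟩
      · have : dd i0 w = 1 := dd_shift hn i0 (by omega)
        rw [← heq, dd_self hn] at this
        omega
      · obtain ⟨⟨hd1, hd2⟩, hbT⟩ := hstep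
        apply hbT
        simp only [hT, Finset.mem_image, Finset.mem_Icc]
        exact ⟨dd i0 b, ⟨hd1, hd2⟩, by rw [shift_dd]⟩
  · intro T hT
    by_contra hcon
    exact hT (circ_arc_avoid hk1 hkn (by omega))

end Circ3

section DegCut
variable {n k : ℕ} {G : Fin n → Fin n → Prop}

lemma exists_avoid_vertex {S : Finset (Fin n)} {v : Fin n} (h : S.card + 1 < n) :
    ∃ w : Fin n, w ∉ S ∧ w ≠ v := by
  by_contra hcon
  push_neg at hcon
  have hsub : (Finset.univ : Finset (Fin n)) ⊆ insert v S := by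
    intro x _
    by_cases hx : x ∈ S
    · exact Finset.mem_insert_of_mem hx
    · exact Finset.mem_insert.2 (Or.inl (hcon x hx))
  have := Finset.card_le_card hsub
  rw [Finset.card_univ, Fintype.card_fin] at this
  have := Finset.card_insert_le v S
  omega

lemma outdeg_ge_of_vertexConn (hloop : ∀ i, ¬ G i i) (hkn : k + 2 ≤ n)
    (hvc : vertexConnIs G k) (v : Fin n) : k ≤ outdeg G v := by
  by_contra hcon
  push_neg at hcon
  set S := Finset.univ.filter (fun j => G v j) with hS
  have hcard : S.card < k := hcon
  have hav : SConnAvoid G S := by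
    by_contra h
    have := hvc.2 S h
    omega
  have hvS : v ∉ S := by
    simp only [hS, Finset.mem_filter]
    exact fun h => hloop v h.2
  obtain ⟨w, hwS, hwv⟩ := exists_avoid_vertex (v := v) (S := S) (by omega)
  have hreach := hav v w hvS hwS
  rcases Relation.ReflTransGen.cases_head hreach with heq | ⟨b, hstep, -⟩
  · exact hwv heq.symm
  · obtain ⟨hGb, -, hbS⟩ := hstep
    exact hbS (by simp only [hS, Finset.mem_filter]; exact ⟨Finset.mem_univ _, hGb⟩)

lemma indeg_ge_of_vertexConn (hloop : ∀ i, ¬ G i i) (hkn : k + 2 ≤ n)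
    (hvc : vertexConnIs G k) (v : Fin n) : k ≤ indeg G v := by
  by_contra hcon
  push_neg at hcon
  set S := Finset.univ.filter (fun j => G j v) with hS
  have hcard : S.card < k := hcon
  have hav : SConnAvoid G S := by
    by_contra h
    have := hvc.2 S h
    omega
  have hvS : v ∉ S := by
    simp only [hS, Finset.mem_filter]
    exact fun h => hloop v h.2
  obtain ⟨w, hwS, hwv⟩ := exists_avoid_vertex (v := v) (S := S) (by omega)
  have hreach := hav w v hwS hvS
  rcases (Relation.ReflTransGen.cases_tail hreach) with heq | ⟨b, -, hstep⟩
  · exact hwv heq.symm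
  · obtain ⟨hGb, hbS, -⟩ := hstep
    exact hbS (by simp only [hS, Finset.mem_filter]; exact ⟨Finset.mem_univ _, hGb⟩)

lemma outdeg_ge_of_arcConn (hloop : ∀ i, ¬ G i i) (hkn : k + 2 ≤ n)
    (hac : arcConnIs G k) (v : Fin n) : k ≤ outdeg G v := by
  by_contra hcon
  push_neg at hcon
  set T := (Finset.univ.filter (fun j => G v j)).image (fun j => (v, j)) with hT
  have hcard : T.card < k := by
    calc T.card ≤ (Finset.univ.filter (fun j => G v j)).card := Finset.card_image_le
      _ < k := hcon
  have hsc : SConn (delArcs G T) := by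
    by_contra h
    have := hac.2 T h
    omega
  obtain ⟨w, -, hwv⟩ := exists_avoid_vertex (v := v) (S := (∅ : Finset (Fin n))) (by rw [Finset.card_empty]; omega)
  have hreach := hsc v w
  rcases Relation.ReflTransGen.cases_head hreach with heq | ⟨b, hstep, -⟩
  · exact hwv heq.symm
  · obtain ⟨hGb, hbT⟩ := hstep
    apply hbT
    simp only [hT, Finset.mem_image, Finset.mem_filter]
    exact ⟨b, ⟨Finset.mem_univ _, hGb⟩, rfl⟩

lemma indeg_ge_of_arcConn (hloop : ∀ i, ¬ G i i) (hkn : k + 2 ≤ n)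
    (hac : arcConnIs G k) (v : Fin n) : k ≤ indeg G v := by
  by_contra hcon
  push_neg at hcon
  set T := (Finset.univ.filter (fun j => G j v)).image (fun j => (j, v)) with hT
  have hcard : T.card < k := by
    calc T.card ≤ (Finset.univ.filter (fun j => G j v)).card := Finset.card_image_le
      _ < k := hcon
  have hsc : SConn (delArcs G T) := by
    by_contra h
    have := hac.2 T h
    omega
  obtain ⟨w, -, hwv⟩ := exists_avoid_vertex (v := v) (S := (∅ : Finset (Fin n))) (by rw [Finset.card_empty]; omega)
  have hreach := hsc w v
  rcases (Relation.ReflTransGen.cases_tail hreach) with heq | ⟨b, -, hstep⟩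
  · exact hwv heq.symm
  · obtain ⟨hGb, hbT⟩ := hstep
    apply hbT
    simp only [hT, Finset.mem_image, Finset.mem_filter]
    exact ⟨b, ⟨Finset.mem_univ _, hGb⟩, rfl⟩

lemma sum_outdeg_eq_sum_indeg : ∑ v, outdeg G v = ∑ v, indeg G v := by
  simp only [outdeg, indeg, Finset.card_filter]
  rw [Finset.sum_comm]

lemma indeg_eq_of_outdeg_eq (hout : ∀ v, outdeg G v = k) (hin : ∀ v, k ≤ indeg G v)
    (v : Fin n) : indeg G v = k := by
  by_contra hcon
  have hlt : k < indeg G v := lt_of_le_of_ne (hin v) (Ne.symm hcon)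
  have hsum : ∑ w, indeg G w = n * k := by
    rw [← sum_outdeg_eq_sum_indeg]
    simp [hout, Finset.sum_const, Finset.card_univ]
  have : ∑ w, (fun _ => k) w < ∑ w, indeg G w :=
    Finset.sum_lt_sum (fun w _ => hin w) ⟨v, Finset.mem_univ v, hlt⟩
  simp only [Finset.sum_const, Finset.card_univ, Fintype.card_fin, smul_eq_mul] at this
  omega

end DegCut

end Aux19b

/-- the minimum `A_α` spectral radius among strongly connected digraphs
on `n` vertices with vertex connectivity `k` (resp. arc connectivity `k`) equals `k`,
and any digraph attaining the minimum is `k`-regular. -/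

theorem stmt19 {n k : ℕ} (hk1 : 1 ≤ k) (hk2 : k ≤ n - 2)
    (α : ℝ) (hα0 : 0 ≤ α) (hα1 : α < 1) :
    IsLeast {r : ℝ | ∃ G : Fin n → Fin n → Prop,
      (∀ i, ¬ G i i) ∧ SConn G ∧ vertexConnIs G k ∧ lamAlpha α G = r} (k : ℝ) ∧
    IsLeast {r : ℝ | ∃ G : Fin n → Fin n → Prop,
      (∀ i, ¬ G i i) ∧ SConn G ∧ arcConnIs G k ∧ lamAlpha α G = r} (k : ℝ) ∧
    (∀ G : Fin n → Fin n → Prop, (∀ i, ¬ G i i) → SConn G →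
      (vertexConnIs G k ∨ arcConnIs G k) → lamAlpha α G = (k : ℝ) →
      ∀ v, outdeg G v = k ∧ indeg G v = k) := by
  have hn3 : k + 2 ≤ n := by omega
  have hn : 0 < n := by omega
  have hloopW : ∀ i, ¬ circG n k i i := circ_noloop
  have hsconnW : SConn (circG n k) := circ_sconn hk1 hn3
  have houtW : ∀ i, outdeg (circG n k) i = k := circ_outdeg hn3
  have hlamW : lamAlpha α (circG n k) = (k : ℝ) := by
    unfold lamAlpha
    refine specRad_eq_of_rowsum hn _ (Aalpha_nonneg hα0 hα1) (fun i => ?_)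
    rw [Aalpha_rowsum, houtW i]
  have hlower : ∀ G : Fin n → Fin n → Prop, (∀ i, ¬ G i i) →
      (vertexConnIs G k ∨ arcConnIs G k) → (k:ℝ) ≤ lamAlpha α G := by
    intro G hloop hconn
    have hdeg : ∀ v, k ≤ outdeg G v := by
      rcases hconn with h | h
      · exact outdeg_ge_of_vertexConn hloop hn3 h
      · exact outdeg_ge_of_arcConn hloop hn3 h
    unfold lamAlpha
    refine specRad_ge_of_rowsum hn _ (Aalpha_nonneg hα0 hα1) (by positivity) (fun i => ?_)
    rw [Aalpha_rowsum]
    exact_mod_cast hdeg i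
  refine ⟨⟨⟨circG n k, hloopW, hsconnW, circ_vertexConn hk1 hn3, hlamW⟩, ?_⟩,
    ⟨⟨circG n k, hloopW, hsconnW, circ_arcConn hk1 hn3, hlamW⟩, ?_⟩, ?_⟩
  · rintro r ⟨G, hloop, hsc, hvc, rfl⟩
    exact hlower G hloop (Or.inl hvc)
  · rintro r ⟨G, hloop, hsc, hac, rfl⟩
    exact hlower G hloop (Or.inr hac)
  · intro G hloop hsc hconn hlam v
    have hdeg : ∀ w, k ≤ outdeg G w := by
      rcases hconn with h | h
      · exact outdeg_ge_of_vertexConn hloop hn3 h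
      · exact outdeg_ge_of_arcConn hloop hn3 h
    have hindeg : ∀ w, k ≤ indeg G w := by
      rcases hconn with h | h
      · exact indeg_ge_of_vertexConn hloop hn3 h
      · exact indeg_ge_of_arcConn hloop hn3 h
    have hout : ∀ w, outdeg G w = k := by
      intro w
      by_contra hne
      have hgt : k + 1 ≤ outdeg G w := lt_of_le_of_ne (hdeg w) (Ne.symm hne)
      have hstrict : (k:ℝ) < lamAlpha α G := by
        unfold lamAlpha
        refine specRad_gt_of_rowsum hn _ (Aalpha_nonneg hα0 hα1)
          (by exact_mod_cast hk1) (fun i => ?_) w ?_ (c := 1 - α)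
          (by linarith) (by linarith) (fun i => Aalpha_reach hα0 hα1 hloop (hsc i w))
        · rw [Aalpha_rowsum]; exact_mod_cast hdeg i
        · rw [Aalpha_rowsum]; exact_mod_cast hgt
      rw [hlam] at hstrict
      exact lt_irrefl _ hstrict
    exact ⟨hout v, indeg_eq_of_outdeg_eq hout hindeg v⟩
end
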